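/- arXiv:1806.05577 — 9 statements merged into one kernel-verified Lean document; each statement's English description precedes it below -/
import Mathlib

section
/- Let X be a real random variable, u non-decreasing, v strictly increasing, with square-integrable images. If Cov(u(X), v(X)) = 0, then u is almost surely constant on the support of X (i.e. u(X) is an a.s. constant random variable). -/
open MeasureTheory

/-- Equality case of Chebyshev's other inequality: if `u` is non-decreasing, `v` is strictly
increasing, both with square-integrable images, and `Cov(u(X), v(X)) = 0`, then `u(X)` is
an a.s. constant random variable. -/
theorem chebyshev_other_inequality_equality_case
    {Ω : Type*} [MeasurableSpace Ω] (μ : Measure Ω) [IsProbabilityMeasure μ]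
    (X : Ω → ℝ) (hX : Measurable X) (u v : ℝ → ℝ)
    (hu : Monotone u) (hv : StrictMono v)
    (hu2 : MemLp (fun ω => u (X ω)) 2 μ)
    (hv2 : MemLp (fun ω => v (X ω)) 2 μ)
    (hcov : (∫ ω, u (X ω) * v (X ω) ∂μ) = (∫ ω, u (X ω) ∂μ) * ∫ ω, v (X ω) ∂μ) :
    ∃ c : ℝ, ∀ᵐ ω ∂μ, u (X ω) = c := by
  have hum : Measurable u := hu.measurable
  have hvm : Measurable v := hv.monotone.measurable
  set ν : Measure ℝ := μ.map X with hν
  have : IsProbabilityMeasure ν := Measure.isProbabilityMeasure_map hX.aemeasurable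
  -- transfer Memℒp
  have hu2' : MemLp u 2 ν := by
    rw [memLp_map_measure_iff hum.aestronglyMeasurable hX.aemeasurable]
    exact hu2
  have hv2' : MemLp v 2 ν := by
    rw [memLp_map_measure_iff hvm.aestronglyMeasurable hX.aemeasurable]
    exact hv2
  have huI : Integrable u ν := hu2'.integrable (by norm_num)
  have hvI : Integrable v ν := hv2'.integrable (by norm_num)
  have huvI : Integrable (fun x => u x * v x) ν := by
    have := hu2'.smul (φ := v) hv2' (r := 1)
      (hpqr := ⟨by simp only [one_div, inv_one, ENNReal.inv_two_add_inv_two]⟩)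
    rw [memLp_one_iff_integrable] at this
    have h2 : (fun x => u x * v x) = v • u := by funext x; simp [mul_comm]
    rw [h2]; exact this
  -- rewrite hypothesis integrals over ν
  have hIuv : (∫ x, u x * v x ∂ν) = (∫ x, u x ∂ν) * ∫ x, v x ∂ν := by
    rw [hν, integral_map hX.aemeasurable (f := fun x => u x * v x) (hum.mul hvm).aestronglyMeasurable,
      integral_map hX.aemeasurable hum.aestronglyMeasurable,
      integral_map hX.aemeasurable hvm.aestronglyMeasurable]
    exact hcov
  -- the product function
  set F : ℝ × ℝ → ℝ := fun p => (u p.1 - u p.2) * (v p.1 - v p.2) with hF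
  have hFnn : ∀ p, 0 ≤ F p := by
    intro p
    show 0 ≤ (u p.1 - u p.2) * (v p.1 - v p.2)
    rcases le_total p.1 p.2 with h | h
    · have h1 := hu h
      have h2 := hv.monotone h
      nlinarith
    · have h1 := hu h
      have h2 := hv.monotone h
      nlinarith
  -- integrability of each expanded term
  have mp1 : MeasurePreserving (Prod.fst : ℝ × ℝ → ℝ) (ν.prod ν) ν :=
    ⟨measurable_fst, Measure.fst_prod⟩
  have mp2 : MeasurePreserving (Prod.snd : ℝ × ℝ → ℝ) (ν.prod ν) ν :=
    ⟨measurable_snd, Measure.snd_prod⟩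
  have i1 : Integrable (fun p : ℝ × ℝ => u p.1 * v p.1) (ν.prod ν) :=
    (mp1.integrable_comp (hum.mul hvm).aestronglyMeasurable).2 huvI
  have i2 : Integrable (fun p : ℝ × ℝ => u p.2 * v p.2) (ν.prod ν) :=
    (mp2.integrable_comp (hum.mul hvm).aestronglyMeasurable).2 huvI
  have i3 : Integrable (fun p : ℝ × ℝ => u p.1 * v p.2) (ν.prod ν) := huI.mul_prod hvI
  have i4 : Integrable (fun p : ℝ × ℝ => u p.2 * v p.1) (ν.prod ν) := by
    have := hvI.mul_prod huI
    simpa [mul_comm] using this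
  have hFeq : F = fun p : ℝ × ℝ =>
      u p.1 * v p.1 + u p.2 * v p.2 - (u p.1 * v p.2 + u p.2 * v p.1) := by
    funext p; simp only [hF]; ring
  have hFI : Integrable F (ν.prod ν) := by
    rw [hFeq]; exact (i1.add i2).sub (i3.add i4)
  -- the integral of F is zero
  have hIF : (∫ p, F p ∂(ν.prod ν)) = 0 := by
    have hmapf : (ν.prod ν).map Prod.fst = ν := Measure.fst_prod
    have hmaps : (ν.prod ν).map Prod.snd = ν := Measure.snd_prod
    have e1 : (∫ p : ℝ × ℝ, u p.1 * v p.1 ∂(ν.prod ν)) = ∫ x, u x * v x ∂ν := by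
      conv_rhs => rw [← hmapf]
      exact (integral_map measurable_fst.aemeasurable
        (hum.mul hvm).aestronglyMeasurable).symm
    have e2 : (∫ p : ℝ × ℝ, u p.2 * v p.2 ∂(ν.prod ν)) = ∫ x, u x * v x ∂ν := by
      conv_rhs => rw [← hmaps]
      exact (integral_map measurable_snd.aemeasurable
        (hum.mul hvm).aestronglyMeasurable).symm
    have e3 : (∫ p : ℝ × ℝ, u p.1 * v p.2 ∂(ν.prod ν)) = (∫ x, u x ∂ν) * ∫ x, v x ∂ν :=
      integral_prod_mul u v
    have e4 : (∫ p : ℝ × ℝ, u p.2 * v p.1 ∂(ν.prod ν)) = (∫ x, u x ∂ν) * ∫ x, v x ∂ν := by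
      have := integral_prod_mul (μ := ν) (ν := ν) v u
      rw [show (fun p : ℝ × ℝ => u p.2 * v p.1) = fun p : ℝ × ℝ => v p.1 * u p.2 by
        funext p; ring]
      rw [this]; ring
    rw [hFeq]
    have h12 := integral_add i1 i2
    have h34 := integral_add i3 i4
    have hsub := integral_sub (i1.add i2) (i3.add i4)
    simp only [Pi.add_apply] at h12 h34 hsub
    show (∫ p : ℝ × ℝ, (u p.1 * v p.1 + u p.2 * v p.2 - (u p.1 * v p.2 + u p.2 * v p.1))
      ∂(ν.prod ν)) = 0
    rw [hsub, h12, h34, e1, e2, e3, e4, hIuv]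
    ring
  -- F = 0 a.e.
  have hF0 : ∀ᵐ p ∂(ν.prod ν), F p = 0 := by
    have := (integral_eq_zero_iff_of_nonneg hFnn hFI).1 hIF
    filter_upwards [this] with p hp using hp
  -- hence u p.1 = u p.2 a.e.
  have hueq : ∀ᵐ p ∂(ν.prod ν), u p.1 = u p.2 := by
    filter_upwards [hF0] with p hp
    rcases mul_eq_zero.1 hp with h | h
    · linarith [sub_eq_zero.1 h]
    · have : p.1 = p.2 := hv.injective (sub_eq_zero.1 h)
      rw [this]
  have h2 : ∀ᵐ x ∂ν, ∀ᵐ y ∂ν, u x = u y := Measure.ae_ae_of_ae_prod hueq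
  obtain ⟨x₀, hx₀⟩ := h2.exists
  refine ⟨u x₀, ?_⟩
  have : ∀ᵐ y ∂ν, u y = u x₀ := by filter_upwards [hx₀] with y hy using hy.symm
  rw [hν] at this
  exact (ae_map_iff hX.aemeasurable (measurableSet_eq_fun hum measurable_const)).1 this
end

section
/- Let f: ℝ → ℝ₊ be a twice continuously differentiable probability density with potential φ = −log f strictly convex (φ'' > 0), and suppose φ''(x) ≥ 1/α for all x and some α > 0. If X has density f and g is continuously differentiable with g(X) ∈ L², then Var(g(X)) ≤ α·E[g'(X)²]. -/
open MeasureTheory Set Filter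


lemma aux_tail (F G : ℝ → ℝ) (hd : ∀ x, HasDerivAt F (G x) x) (hGc : Continuous G)
    (c : ℝ) (hpos : ∀ x, c ≤ x → 0 ≤ G x) (hT : Tendsto F atTop (nhds 0)) (t : ℝ) :
    IntegrableOn G (Set.Ioi t) volume ∧ ∫ x in Set.Ioi t, G x = - F t := by
  have a := max t c
  have hint : IntegrableOn G (Set.Ioi t) volume := by
    have h1 : IntegrableOn G (Set.Ioi (max t c)) volume :=
      integrableOn_Ioi_deriv_of_nonneg' (fun x _ => hd x)
        (fun x hx => hpos x ((le_max_right t c).trans hx.le)) hT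
    have h2 : IntegrableOn G (Set.Ioc t (max t c)) volume :=
      (hGc.integrableOn_Icc (a := t) (b := max t c)).mono_set Ioc_subset_Icc_self
    have := h2.union h1
    rwa [Set.Ioc_union_Ioi_eq_Ioi (le_max_left t c)] at this
  refine ⟨hint, ?_⟩
  have := integral_Ioi_of_hasDerivAt_of_tendsto (a := t)
    (hd t).continuousAt.continuousWithinAt (fun x _ => hd x) hint hT
  simpa using this


set_option maxHeartbeats 2000000 in
/-- One-dimensional Brascamp–Lieb inequality under strong log-concavity: if `f` is a twice
continuously differentiable probability density with potential `φ = -log f` strictly convex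
and `φ'' ≥ 1/α`, then for every `C¹` function `g` (square-integrable, with integrable
`g'²`) we have `Var(g(X)) ≤ α · E[g'(X)²]` where `X` has density `f`. -/
theorem brascamp_lieb_one_dim
    (f : ℝ → ℝ) (hf : ContDiff ℝ 2 f) (hfpos : ∀ x, 0 < f x)
    (α : ℝ) (hα : 0 < α)
    (hconv : ∀ x, 0 < deriv (deriv fun y => -Real.log (f y)) x)
    (hslc : ∀ x, 1 / α ≤ deriv (deriv fun y => -Real.log (f y)) x)
    (hprob : IsProbabilityMeasure (volume.withDensity fun x => ENNReal.ofReal (f x)))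
    (g : ℝ → ℝ) (hg : ContDiff ℝ 1 g)
    (hg2 : MemLp g 2 (volume.withDensity fun x => ENNReal.ofReal (f x)))
    (hg' : Integrable (fun x => (deriv g x) ^ 2)
      (volume.withDensity fun x => ENNReal.ofReal (f x))) :
    ProbabilityTheory.variance g (volume.withDensity fun x => ENNReal.ofReal (f x))
      ≤ α * ∫ x, (deriv g x) ^ 2 ∂(volume.withDensity fun x => ENNReal.ofReal (f x)) := by
  set φ : ℝ → ℝ := fun y => -Real.log (f y) with hφdef
  set ψ : ℝ → ℝ := deriv φ with hψdef
  have hφC : ContDiff ℝ 2 φ := (hf.log fun x => (hfpos x).ne').neg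
  have hφ21 : ContDiff ℝ (1 + 1) φ := by norm_num; exact hφC
  have hψC : ContDiff ℝ 1 ψ := (contDiff_succ_iff_deriv.mp hφ21).2.2
  have hψd : Differentiable ℝ ψ := hψC.differentiable one_ne_zero
  have hψcont : Continuous ψ := hψC.continuous
  -- ψ x = - deriv f x / f x, i.e. HasDerivAt f (-(ψ x) * f x) x
  have hfd : ∀ x, HasDerivAt f (-(ψ x) * f x) x := by
    intro x
    have hdf : HasDerivAt f (deriv f x) x :=
      ((hf.differentiable (by norm_num)) x).hasDerivAt
    have hlog : HasDerivAt φ (-(deriv f x / f x)) x := ((hdf.log (hfpos x).ne')).neg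
    have hx : ψ x = -(deriv f x / f x) := hlog.deriv
    rw [hx]
    have hne := (hfpos x).ne'
    have : -(-(deriv f x / f x)) * f x = deriv f x := by field_simp
    rw [this]
    exact hdf
  -- slope bound
  have hslope : ∀ ⦃y x : ℝ⦄, y ≤ x → (x - y) / α ≤ ψ x - ψ y := by
    have hmono : Monotone (fun x => ψ x - x / α) := by
      apply monotone_of_deriv_nonneg
      · exact hψd.sub (differentiable_id.div_const α)
      · intro x
        have hda : HasDerivAt (fun x => ψ x - x / α) (deriv ψ x - 1 / α) x :=
          (hψd x).hasDerivAt.sub ((hasDerivAt_id x).div_const α)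
        rw [hda.deriv]
        have h := hslc x
        linarith
    intro y x hyx
    have h := hmono hyx
    simp only [] at h
    have h2 : (x - y)/α = x/α - y/α := by ring
    linarith
  -- zero of ψ
  obtain ⟨m, hm⟩ : ∃ m, ψ m = 0 := by
    set X := α * (|ψ 0| + 1) with hX
    have hX0 : 0 ≤ X := by positivity
    have h1 : X / α = |ψ 0| + 1 := by field_simp [hX]; exact hX
    have hup : 1 ≤ ψ X := by
      have := hslope hX0
      rw [sub_zero, h1] at this
      have := abs_nonneg (ψ 0)
      have h3 := neg_abs_le (ψ 0)
      linarith [hslope hX0]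
    have hdown : ψ (-X) ≤ -1 := by
      have h2 : (-X : ℝ) ≤ 0 := by linarith
      have := hslope h2
      have h4 : (0 - -X)/α = |ψ 0| + 1 := by rw [sub_neg_eq_add, zero_add, h1.symm]
      have h5 := le_abs_self (ψ 0)
      rw [h4] at this
      linarith
    have hsub : Set.Icc (ψ (-X)) (ψ X) ⊆ ψ '' Set.Icc (-X) X :=
      intermediate_value_Icc (by linarith) hψcont.continuousOn
    have h0 : (0:ℝ) ∈ Set.Icc (ψ (-X)) (ψ X) := ⟨by linarith, by linarith⟩
    obtain ⟨m, _, hm⟩ := hsub h0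
    exact ⟨m, hm⟩
  have hψ_nonneg : ∀ x, m ≤ x → 0 ≤ ψ x := by
    intro x hx
    have h := hslope hx
    rw [hm] at h
    have : 0 ≤ (x - m)/α := div_nonneg (by linarith) hα.le
    linarith
  have hψ_nonpos : ∀ x, x ≤ m → ψ x ≤ 0 := by
    intro x hx
    have h := hslope hx
    rw [hm] at h
    have : 0 ≤ (m - x)/α := div_nonneg (by linarith) hα.le
    linarith
  have hfc : Continuous f := hf.continuous
  have hfm : Measurable f := hfc.measurable
  -- total mass
  have hmass : ∫⁻ x, ENNReal.ofReal (f x) = 1 := by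
    have := hprob.measure_univ
    rwa [withDensity_apply _ MeasurableSet.univ, Measure.restrict_univ] at this
  have hfint : Integrable f volume := by
    refine ⟨hfc.aestronglyMeasurable, ?_⟩
    rw [hasFiniteIntegral_iff_ofReal (Filter.Eventually.of_forall fun x => (hfpos x).le)]
    rw [hmass]; exact ENNReal.one_lt_top
  -- monotonicity of f on both sides of m
  have hf_anti : AntitoneOn f (Set.Ici m) := by
    apply antitoneOn_of_deriv_nonpos (convex_Ici m) hfc.continuousOn
      (fun x _ => ((hf.differentiable (by norm_num)) x).differentiableWithinAt)
    intro x hx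
    rw [interior_Ici] at hx
    rw [(hfd x).deriv]
    have := hψ_nonneg x (le_of_lt hx)
    nlinarith [hfpos x]
  have hf_mono : MonotoneOn f (Set.Iic m) := by
    apply monotoneOn_of_deriv_nonneg (convex_Iic m) hfc.continuousOn
      (fun x _ => ((hf.differentiable (by norm_num)) x).differentiableWithinAt)
    intro x hx
    rw [interior_Iic] at hx
    rw [(hfd x).deriv]
    have := hψ_nonpos x (le_of_lt hx)
    nlinarith [hfpos x]
  -- limit at +infinity
  have htop : Filter.Tendsto f Filter.atTop (nhds 0) := by
    set F : ℝ → ℝ := fun x => f (max x m) with hF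
    have hFanti : Antitone F := fun x y hxy =>
      hf_anti (Set.mem_Ici.mpr (le_max_right x m)) (Set.mem_Ici.mpr (le_max_right y m))
        (max_le_max hxy le_rfl)
    have hFbdd : BddBelow (Set.range F) := by
      refine ⟨0, ?_⟩
      rintro v ⟨x, rfl⟩
      exact (hfpos _).le
    have hFt : Filter.Tendsto F Filter.atTop (nhds (⨅ x, F x)) :=
      tendsto_atTop_ciInf hFanti hFbdd
    set L := ⨅ x, F x with hL
    have he : F =ᶠ[Filter.atTop] f := by
      filter_upwards [Filter.eventually_ge_atTop m] with x hx
      simp [hF, max_eq_left hx]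
    have htopL : Filter.Tendsto f Filter.atTop (nhds L) := hFt.congr' he
    have hL0 : 0 ≤ L := le_ciInf fun x => (hfpos _).le
    have hLle : ∀ x, m ≤ x → L ≤ f x := by
      intro x hx
      have h := ciInf_le hFbdd x
      have hFx : F x = f x := by simp [hF, max_eq_left hx]
      rw [hFx] at h
      exact h
    have hLeq : L = 0 := by
      by_contra hne
      have hLpos : 0 < L := lt_of_le_of_ne hL0 (Ne.symm hne)
      have hbad : (⊤ : ENNReal) ≤ 1 := by
        calc (⊤ : ENNReal) = ENNReal.ofReal L * volume (Set.Ici m) := by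
              rw [Real.volume_Ici, ENNReal.mul_top]
              simp [ENNReal.ofReal_eq_zero, not_le, hLpos]
          _ = ∫⁻ _ in Set.Ici m, ENNReal.ofReal L := by rw [setLIntegral_const]
          _ ≤ ∫⁻ x in Set.Ici m, ENNReal.ofReal (f x) := by
              refine setLIntegral_mono (hfm.ennreal_ofReal) fun x hx => ?_
              exact ENNReal.ofReal_le_ofReal (hLle x hx)
          _ ≤ ∫⁻ x, ENNReal.ofReal (f x) := setLIntegral_le_lintegral _ _
          _ = 1 := hmass
      simp at hbad
    rwa [hLeq] at htopL
  -- limit at -infinity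
  have hbot : Filter.Tendsto f Filter.atBot (nhds 0) := by
    set F : ℝ → ℝ := fun x => f (min x m) with hF
    have hFmono : Monotone F := fun x y hxy =>
      hf_mono (Set.mem_Iic.mpr (min_le_right x m)) (Set.mem_Iic.mpr (min_le_right y m))
        (min_le_min hxy le_rfl)
    have hFbdd : BddBelow (Set.range F) := by
      refine ⟨0, ?_⟩
      rintro v ⟨x, rfl⟩
      exact (hfpos _).le
    have hFt : Filter.Tendsto F Filter.atBot (nhds (⨅ x, F x)) :=
      tendsto_atBot_ciInf hFmono hFbdd
    set L := ⨅ x, F x with hL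
    have he : F =ᶠ[Filter.atBot] f := by
      filter_upwards [Filter.eventually_le_atBot m] with x hx
      simp [hF, min_eq_left hx]
    have hbotL : Filter.Tendsto f Filter.atBot (nhds L) := hFt.congr' he
    have hL0 : 0 ≤ L := le_ciInf fun x => (hfpos _).le
    have hLle : ∀ x, x ≤ m → L ≤ f x := by
      intro x hx
      have h := ciInf_le hFbdd x
      have hFx : F x = f x := by simp [hF, min_eq_left hx]
      rw [hFx] at h
      exact h
    have hLeq : L = 0 := by
      by_contra hne
      have hLpos : 0 < L := lt_of_le_of_ne hL0 (Ne.symm hne)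
      have hbad : (⊤ : ENNReal) ≤ 1 := by
        calc (⊤ : ENNReal) = ENNReal.ofReal L * volume (Set.Iic m) := by
              rw [Real.volume_Iic, ENNReal.mul_top]
              simp [ENNReal.ofReal_eq_zero, not_le, hLpos]
          _ = ∫⁻ _ in Set.Iic m, ENNReal.ofReal L := by rw [setLIntegral_const]
          _ ≤ ∫⁻ x in Set.Iic m, ENNReal.ofReal (f x) := by
              refine setLIntegral_mono (hfm.ennreal_ofReal) fun x hx => ?_
              exact ENNReal.ofReal_le_ofReal (hLle x hx)
          _ ≤ ∫⁻ x, ENNReal.ofReal (f x) := setLIntegral_le_lintegral _ _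
          _ = 1 := hmass
      simp at hbad
    rwa [hLeq] at hbotL
  -- improper integrals
  have hIoi : ∀ t : ℝ, IntegrableOn (fun x => ψ x * f x) (Set.Ioi t) volume ∧
      ∫ x in Set.Ioi t, ψ x * f x = f t := by
    intro t
    have hd : ∀ x, HasDerivAt (fun y => -f y) (ψ x * f x) x := by
      intro x
      have h := (hfd x).neg
      rw [neg_mul, neg_neg] at h
      exact h
    have h := aux_tail (fun y => -f y) (fun x => ψ x * f x) hd (hψcont.mul hfc) m
      (fun x hx => mul_nonneg (hψ_nonneg x hx) (hfpos x).le)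
      (by simpa using htop.neg) t
    simpa using h
  have hIio : ∀ t : ℝ, IntegrableOn (fun x => -ψ x * f x) (Set.Iio t) volume ∧
      ∫ x in Set.Iio t, -ψ x * f x = f t := by
    intro t
    set G : ℝ → ℝ := fun x => -ψ x * f x with hG
    have hd : ∀ x, HasDerivAt (fun y => -f (-y)) (G (-x)) x := by
      intro x
      have h1 : HasDerivAt (fun y : ℝ => f (-y)) ((-ψ (-x) * f (-x)) * (-1)) x :=
        (hfd (-x)).comp x (hasDerivAt_neg x)
      have h2 := h1.neg
      have : -((-ψ (-x) * f (-x)) * (-1)) = G (-x) := by simp only [hG]; ring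
      rwa [this] at h2
    have hT : Filter.Tendsto (fun y : ℝ => -f (-y)) Filter.atTop (nhds 0) := by
      have h1 : Filter.Tendsto (fun y : ℝ => f (-y)) Filter.atTop (nhds 0) :=
        hbot.comp tendsto_neg_atTop_atBot
      simpa using h1.neg
    have hGc : Continuous fun x : ℝ => G (-x) := by
      have : Continuous G := (hψcont.neg.mul hfc)
      exact this.comp continuous_neg
    obtain ⟨hint, hval⟩ := aux_tail (fun y => -f (-y)) (fun x => G (-x)) hd hGc (-m)
      (fun x hx => by
        have hxm : -x ≤ m := by linarith
        have := hψ_nonpos (-x) hxm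
        simp only [hG]
        exact mul_nonneg (by linarith) (hfpos _).le)
      hT (-t)
    have hval' : ∫ x in Set.Iio t, G x = f t := by
      have h := integral_comp_neg_Ioi (-t) G
      rw [neg_neg] at h
      rw [← integral_Iic_eq_integral_Iio, ← h, hval]
      simp
    have hint' : IntegrableOn G (Set.Iio t) volume := by
      have h_map_neg : (volume.restrict (Set.Ici (-t))).map Neg.neg = volume.restrict (Set.Iic t) := by
        conv => rhs; rw [← Measure.map_neg_eq_self (volume : Measure ℝ),
          measurableEmbedding_neg.restrict_map]
        simp
      have hIci : IntegrableOn (fun x => G (-x)) (Set.Ici (-t)) volume :=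
        Iff.mpr integrableOn_Ici_iff_integrableOn_Ioi hint
      have : IntegrableOn G (Set.Iic t) volume := by
        rw [IntegrableOn, ← h_map_neg, measurableEmbedding_neg.integrable_map_iff]
        exact hIci
      exact this.mono_set Set.Iio_subset_Iic_self
    exact ⟨hint', hval'⟩
  -- Cauchy-Schwarz on intervals
  have hgd : Differentiable ℝ g := hg.differentiable one_ne_zero
  have hg'c : Continuous (deriv g) := hg.continuous_deriv le_rfl
  have hCS : ∀ y x : ℝ, y ≤ x →
      (g x - g y)^2 ≤ (x - y) * ∫ t in Set.Ioc y x, (deriv g t)^2 := by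
    intro y x hyx
    have hfc' : ∀ t ∈ Set.uIcc y x, HasDerivAt g (deriv g t) t := fun t _ => (hgd t).hasDerivAt
    have hii : IntervalIntegrable (deriv g) volume y x := hg'c.intervalIntegrable y x
    have hftc : ∫ t in y..x, deriv g t = g x - g y :=
      intervalIntegral.integral_eq_sub_of_hasDerivAt hfc' hii
    have hioc : ∫ t in Set.Ioc y x, deriv g t = g x - g y := by
      rw [← hftc, intervalIntegral.integral_of_le hyx]
    set ν := volume.restrict (Set.Ioc y x) with hν
    have hmeas : AEStronglyMeasurable (fun t => |deriv g t|) ν := (hg'c.abs).aestronglyMeasurable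
    have hsqint : Integrable (fun t => |deriv g t| ^ 2) ν := by
      have : IntegrableOn (fun t => |deriv g t| ^ 2) (Set.Ioc y x) volume :=
        ((hg'c.abs.pow 2).integrableOn_Icc (a := y) (b := x)).mono_set Set.Ioc_subset_Icc_self
      exact this
    have hmem2 : MemLp (fun t => |deriv g t|) (ENNReal.ofReal 2) ν := by
      rw [ENNReal.ofReal_ofNat]
      exact (memLp_two_iff_integrable_sq hmeas).mpr (by simpa [sq] using hsqint)
    have hmem2' : MemLp (fun _ : ℝ => (1:ℝ)) (ENNReal.ofReal 2) ν := memLp_const 1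
    have hconj : Real.HolderConjugate 2 2 := Real.HolderConjugate.two_two
    have hhold := integral_mul_le_Lp_mul_Lq_of_nonneg (μ := ν) hconj
      (Filter.Eventually.of_forall fun t => abs_nonneg _)
      (Filter.Eventually.of_forall fun t => zero_le_one)
      hmem2 hmem2'
    have h2cast : ∀ a : ℝ, a ^ (2:ℝ) = a ^ (2:ℕ) := fun a => by
      rw [show (2:ℝ) = ((2:ℕ):ℝ) by norm_num, Real.rpow_natCast]
    simp only [h2cast, one_pow, mul_one] at hhold
    have hconst : ∫ _, (1:ℝ) ∂ν = x - y := by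
      simp [hν, Real.volume_Ioc, ENNReal.toReal_ofReal (sub_nonneg.mpr hyx), hyx]
    rw [hconst] at hhold
    have habs : |g x - g y| ≤ ∫ t in Set.Ioc y x, |deriv g t| := by
      rw [← hioc]
      have := norm_integral_le_integral_norm (μ := ν) (fun t => deriv g t)
      simpa [Real.norm_eq_abs] using this
    have hA : 0 ≤ ∫ t in Set.Ioc y x, |deriv g t| ^ 2 := integral_nonneg fun t => sq_nonneg _
    have hB : (0:ℝ) ≤ x - y := sub_nonneg.mpr hyx
    have h1 : (g x - g y)^2 ≤ (∫ t in Set.Ioc y x, |deriv g t|) ^ 2 := by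
      rw [← sq_abs (g x - g y)]
      exact pow_le_pow_left₀ (abs_nonneg _) habs 2
    have h2 : (∫ t in Set.Ioc y x, |deriv g t|) ^ 2 ≤
        ((∫ t in Set.Ioc y x, |deriv g t| ^ 2) ^ ((1:ℝ)/2) * (x - y) ^ ((1:ℝ)/2)) ^ 2 := by
      apply pow_le_pow_left₀ (integral_nonneg fun t => abs_nonneg _) hhold
    have h3 : ((∫ t in Set.Ioc y x, |deriv g t| ^ 2) ^ ((1:ℝ)/2) * (x - y) ^ ((1:ℝ)/2)) ^ 2
        = (x - y) * ∫ t in Set.Ioc y x, |deriv g t| ^ 2 := by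
      rw [mul_pow, ← Real.rpow_natCast ((∫ t in Set.Ioc y x, |deriv g t| ^ 2) ^ ((1:ℝ)/2)) 2,
        ← Real.rpow_natCast ((x - y) ^ ((1:ℝ)/2)) 2, ← Real.rpow_mul hA, ← Real.rpow_mul hB]
      norm_num
      ring
    have h4 : ∫ t in Set.Ioc y x, |deriv g t| ^ 2 = ∫ t in Set.Ioc y x, (deriv g t) ^ 2 := by
      congr 1
      ext t
      rw [sq_abs]
    calc (g x - g y)^2 ≤ (∫ t in Set.Ioc y x, |deriv g t|) ^ 2 := h1
      _ ≤ ((∫ t in Set.Ioc y x, |deriv g t| ^ 2) ^ ((1:ℝ)/2) * (x - y) ^ ((1:ℝ)/2)) ^ 2 := h2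
      _ = (x - y) * ∫ t in Set.Ioc y x, |deriv g t| ^ 2 := h3
      _ = (x - y) * ∫ t in Set.Ioc y x, (deriv g t) ^ 2 := by rw [h4]
  -- variance reduction
  set μ : Measure ℝ := volume.withDensity fun x => ENNReal.ofReal (f x) with hμdef
  have hgi : Integrable g μ := hg2.integrable one_le_two
  have hgsq : Integrable (fun x => g x ^ 2) μ := by
    have h := hg2.integrable_sq
    simpa [sq] using h
  have hXmem : MemLp (fun x => g x - g m) 2 μ := hg2.sub (memLp_const (g m))
  have hvar : ProbabilityTheory.variance g μ ≤ ∫ x, (g x - g m)^2 ∂μ := by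
    have h1 := ProbabilityTheory.variance_le_expectation_sq (μ := μ)
      (X := fun x => g x - g m) hXmem.aestronglyMeasurable
    have hXsq : ∫ x, ((fun x => g x - g m)^2) x ∂μ
        = ∫ x, (g x^2 - 2 * g m * g x + g m^2) ∂μ := by
      apply integral_congr_ae
      filter_upwards with x
      simp [Pi.pow_apply]
      ring
    have hint2 : Integrable (fun x => 2 * g m * g x) μ := hgi.const_mul _
    have hexp : ∫ x, (g x^2 - 2 * g m * g x + g m^2) ∂μ
        = ∫ x, g x^2 ∂μ - 2 * g m * ∫ x, g x ∂μ + g m^2 := by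
      have ha : Integrable (fun x => g x ^ 2 - 2 * g m * g x) μ := hgsq.sub hint2
      have e1 : ∫ x, (g x ^ 2 - 2 * g m * g x + g m ^ 2) ∂μ
          = (∫ x, (g x ^ 2 - 2 * g m * g x) ∂μ) + ∫ _x, (g m ^ 2 : ℝ) ∂μ :=
        integral_add ha (integrable_const _)
      have e2 : ∫ x, (g x ^ 2 - 2 * g m * g x) ∂μ
          = (∫ x, g x ^ 2 ∂μ) - ∫ x, 2 * g m * g x ∂μ := integral_sub hgsq hint2
      have e3 : ∫ x, 2 * g m * g x ∂μ = 2 * g m * ∫ x, g x ∂μ := integral_const_mul _ _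
      rw [e1, e2, e3, integral_const]
      simp [measure_univ]
    have h2 : ProbabilityTheory.variance g μ
        = ProbabilityTheory.variance (fun x => g x - g m) μ := by
      rw [ProbabilityTheory.variance_eq_sub hg2, ProbabilityTheory.variance_eq_sub hXmem]
      have hXint : ∫ x, (g x - g m) ∂μ = ∫ x, g x ∂μ - g m := by
        rw [integral_sub hgi (integrable_const _), integral_const]
        simp [measure_univ]
      have hgsq' : ∫ x, (g^2) x ∂μ = ∫ x, g x^2 ∂μ := by
        apply integral_congr_ae; filter_upwards with x; simp [Pi.pow_apply]
      rw [hXsq, hexp, hXint, hgsq']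
      ring
    rw [h2]
    refine h1.trans_eq ?_
    apply integral_congr_ae
    filter_upwards with x
    simp [Pi.pow_apply]
  -- the key estimate
  set w : ℝ → ℝ := fun t => deriv g t ^ 2 with hwdef
  have hwc : Continuous w := hg'c.pow 2
  have hwm : Measurable fun t => ENNReal.ofReal (w t) := hwc.measurable.ennreal_ofReal
  have hwnn : ∀ t, 0 ≤ w t := fun t => sq_nonneg _
  have hW0 : 0 ≤ ∫ x, w x ∂μ := integral_nonneg hwnn
  have hXsqint : Integrable (fun x => (g x - g m)^2) μ := by
    have h := hXmem.integrable_sq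
    simpa [sq] using h
  -- sets and kernels
  set S1 : Set (ℝ × ℝ) := {p | m < p.2 ∧ p.2 ≤ p.1} with hS1def
  set S2 : Set (ℝ × ℝ) := {p | p.1 < p.2 ∧ p.2 ≤ m} with hS2def
  have hS1meas : MeasurableSet S1 :=
    (measurableSet_lt measurable_const measurable_snd).inter
      (measurableSet_le measurable_snd measurable_fst)
  have hS2meas : MeasurableSet S2 :=
    (measurableSet_lt measurable_fst measurable_snd).inter
      (measurableSet_le measurable_snd measurable_const)
  set K : ℝ × ℝ → ENNReal := fun p =>
    S1.indicator (fun _ => (1:ENNReal)) p * (ENNReal.ofReal (ψ p.1 * f p.1) * ENNReal.ofReal (w p.2))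
    + S2.indicator (fun _ => (1:ENNReal)) p * (ENNReal.ofReal (-ψ p.1 * f p.1) * ENNReal.ofReal (w p.2))
    with hKdef
  have hKmeas : Measurable K := by
    apply Measurable.add
    · exact ((measurable_const.indicator hS1meas).mul
        ((((hψcont.mul hfc).measurable.comp measurable_fst).ennreal_ofReal).mul
          ((hwc.measurable.comp measurable_snd).ennreal_ofReal)))
    · exact ((measurable_const.indicator hS2meas).mul
        ((((hψcont.neg.mul hfc).measurable.comp measurable_fst).ennreal_ofReal).mul
          ((hwc.measurable.comp measurable_snd).ennreal_ofReal)))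
  -- pointwise bound
  have step2 : ∀ x : ℝ, ENNReal.ofReal (f x) * ENNReal.ofReal ((g x - g m)^2)
      ≤ ENNReal.ofReal α * ∫⁻ t, K (x, t) ∂volume := by
    intro x
    rcases le_or_gt m x with hx | hx
    · -- x ≥ m
      have hKx : (fun t => K (x, t)) = fun t =>
          (Set.Ioc m x).indicator (fun t => ENNReal.ofReal (ψ x * f x) * ENNReal.ofReal (w t)) t := by
        funext t
        by_cases ht : t ∈ Set.Ioc m x
        · have h1 : (x, t) ∈ S1 := ⟨ht.1, ht.2⟩
          have h2 : (x, t) ∉ S2 := by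
            intro hc
            have h3 : x < t := hc.1
            have h4 : t ≤ m := hc.2
            linarith
          rw [hKdef]
          simp only [Set.indicator_of_mem h1, Set.indicator_of_notMem h2,
            Set.indicator_of_mem ht, one_mul, zero_mul, add_zero]
        · have h1 : (x, t) ∉ S1 := fun hc => ht ⟨hc.1, hc.2⟩
          have h2 : (x, t) ∉ S2 := by
            intro hc
            exact absurd hc.1 (not_lt.mpr (le_trans hc.2 hx))
          rw [hKdef]
          simp only [Set.indicator_of_notMem h1, Set.indicator_of_notMem h2,
            Set.indicator_of_notMem ht, zero_mul, add_zero]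
      have hJint : IntegrableOn w (Set.Ioc m x) volume :=
        (hwc.integrableOn_Icc (a := m) (b := x)).mono_set Set.Ioc_subset_Icc_self
      have hJval : ∫⁻ t in Set.Ioc m x, ENNReal.ofReal (w t) ∂volume
          = ENNReal.ofReal (∫ t in Set.Ioc m x, w t) := by
        rw [ofReal_integral_eq_lintegral_ofReal hJint
          (Filter.Eventually.of_forall fun t => hwnn t)]
      have hlint : ∫⁻ t, K (x, t) ∂volume
          = ENNReal.ofReal (ψ x * f x) * ENNReal.ofReal (∫ t in Set.Ioc m x, w t) := by
        rw [hKx, lintegral_indicator measurableSet_Ioc, lintegral_const_mul _ hwm, hJval]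
      rw [hlint]
      set J := ∫ t in Set.Ioc m x, w t with hJ
      have hJnn : 0 ≤ J := integral_nonneg fun t => hwnn t
      have hcs := hCS m x hx
      have hsl : x - m ≤ α * ψ x := by
        have h := hslope hx
        rw [hm, sub_zero] at h
        rw [div_le_iff₀ hα] at h
        linarith
      have hreal : f x * (g x - g m)^2 ≤ α * (ψ x * f x * J) := by
        have h1 : (g x - g m)^2 ≤ (x - m) * J := hcs
        have h2 : (x - m) * J ≤ (α * ψ x) * J :=
          mul_le_mul_of_nonneg_right hsl hJnn
        have h3 : (g x - g m)^2 ≤ α * ψ x * J := le_trans h1 h2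
        have h4 := mul_le_mul_of_nonneg_left h3 (hfpos x).le
        calc f x * (g x - g m)^2 ≤ f x * (α * ψ x * J) := h4
          _ = α * (ψ x * f x * J) := by ring
      calc ENNReal.ofReal (f x) * ENNReal.ofReal ((g x - g m)^2)
          = ENNReal.ofReal (f x * (g x - g m)^2) :=
            (ENNReal.ofReal_mul (hfpos x).le).symm
        _ ≤ ENNReal.ofReal (α * (ψ x * f x * J)) := ENNReal.ofReal_le_ofReal hreal
        _ = ENNReal.ofReal α * ENNReal.ofReal (ψ x * f x * J) :=
            ENNReal.ofReal_mul hα.le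
        _ = ENNReal.ofReal α * (ENNReal.ofReal (ψ x * f x) * ENNReal.ofReal J) := by
            rw [ENNReal.ofReal_mul (mul_nonneg (hψ_nonneg x hx) (hfpos x).le)]
    · -- x < m
      have hKx : (fun t => K (x, t)) = fun t =>
          (Set.Ioc x m).indicator (fun t => ENNReal.ofReal (-ψ x * f x) * ENNReal.ofReal (w t)) t := by
        funext t
        by_cases ht : t ∈ Set.Ioc x m
        · have h2 : (x, t) ∈ S2 := ⟨ht.1, ht.2⟩
          have h1 : (x, t) ∉ S1 := by
            intro hc
            have : m < t := hc.1
            have : t ≤ x := hc.2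
            linarith
          rw [hKdef]
          simp only [Set.indicator_of_mem h2, Set.indicator_of_notMem h1,
            Set.indicator_of_mem ht, one_mul, zero_mul, zero_add]
        · have h2 : (x, t) ∉ S2 := fun hc => ht ⟨hc.1, hc.2⟩
          have h1 : (x, t) ∉ S1 := by
            intro hc
            have h3 : m < t := hc.1
            have h4 : t ≤ x := hc.2
            linarith
          rw [hKdef]
          simp only [Set.indicator_of_notMem h1, Set.indicator_of_notMem h2,
            Set.indicator_of_notMem ht, zero_mul, add_zero]
      have hJint : IntegrableOn w (Set.Ioc x m) volume :=
        (hwc.integrableOn_Icc (a := x) (b := m)).mono_set Set.Ioc_subset_Icc_self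
      have hJval : ∫⁻ t in Set.Ioc x m, ENNReal.ofReal (w t) ∂volume
          = ENNReal.ofReal (∫ t in Set.Ioc x m, w t) := by
        rw [ofReal_integral_eq_lintegral_ofReal hJint
          (Filter.Eventually.of_forall fun t => hwnn t)]
      have hlint : ∫⁻ t, K (x, t) ∂volume
          = ENNReal.ofReal (-ψ x * f x) * ENNReal.ofReal (∫ t in Set.Ioc x m, w t) := by
        rw [hKx, lintegral_indicator measurableSet_Ioc, lintegral_const_mul _ hwm, hJval]
      rw [hlint]
      set J := ∫ t in Set.Ioc x m, w t with hJ
      have hJnn : 0 ≤ J := integral_nonneg fun t => hwnn t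
      have hcs := hCS x m hx.le
      have hsl : m - x ≤ α * (-ψ x) := by
        have h := hslope hx.le
        rw [hm] at h
        rw [div_le_iff₀ hα] at h
        linarith
      have hsq : (g x - g m)^2 = (g m - g x)^2 := by ring
      have hreal : f x * (g x - g m)^2 ≤ α * (-ψ x * f x * J) := by
        have h1 : (g x - g m)^2 ≤ (m - x) * J := by rw [hsq]; exact hcs
        have h2 : (m - x) * J ≤ (α * (-ψ x)) * J :=
          mul_le_mul_of_nonneg_right hsl hJnn
        have h3 : (g x - g m)^2 ≤ α * (-ψ x) * J := le_trans h1 h2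
        have h4 := mul_le_mul_of_nonneg_left h3 (hfpos x).le
        calc f x * (g x - g m)^2 ≤ f x * (α * (-ψ x) * J) := h4
          _ = α * (-ψ x * f x * J) := by ring
      calc ENNReal.ofReal (f x) * ENNReal.ofReal ((g x - g m)^2)
          = ENNReal.ofReal (f x * (g x - g m)^2) :=
            (ENNReal.ofReal_mul (hfpos x).le).symm
        _ ≤ ENNReal.ofReal (α * (-ψ x * f x * J)) := ENNReal.ofReal_le_ofReal hreal
        _ = ENNReal.ofReal α * ENNReal.ofReal (-ψ x * f x * J) :=
            ENNReal.ofReal_mul hα.le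
        _ = ENNReal.ofReal α * (ENNReal.ofReal (-ψ x * f x) * ENNReal.ofReal J) := by
            rw [ENNReal.ofReal_mul (mul_nonneg (neg_nonneg.mpr (hψ_nonpos x hx.le)) (hfpos x).le)]
  -- swap
  have hswap : ∫⁻ x, ∫⁻ t, K (x, t) ∂volume ∂volume = ∫⁻ t, ∫⁻ x, K (x, t) ∂volume ∂volume :=
    lintegral_lintegral_swap hKmeas.aemeasurable
  -- inner integral evaluation
  have step5 : ∀ t : ℝ, ∫⁻ x, K (x, t) ∂volume = ENNReal.ofReal (f t) * ENNReal.ofReal (w t) := by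
    intro t
    rcases lt_or_ge m t with ht | ht
    · have hKt : (fun x => K (x, t)) = fun x =>
          (Set.Ici t).indicator (fun x => ENNReal.ofReal (ψ x * f x)) x * ENNReal.ofReal (w t) := by
        funext x
        by_cases hx : x ∈ Set.Ici t
        · have h1 : (x, t) ∈ S1 := ⟨ht, hx⟩
          have h2 : (x, t) ∉ S2 := by
            intro hc
            have h3 : t ≤ m := hc.2
            linarith
          rw [hKdef]
          simp only [Set.indicator_of_mem h1, Set.indicator_of_notMem h2,
            Set.indicator_of_mem hx, one_mul, zero_mul, add_zero, mul_assoc]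
        · have h1 : (x, t) ∉ S1 := by
            intro hc
            exact hx hc.2
          have h2 : (x, t) ∉ S2 := by
            intro hc
            have h3 : t ≤ m := hc.2
            linarith
          rw [hKdef]
          simp only [Set.indicator_of_notMem h1, Set.indicator_of_notMem h2,
            Set.indicator_of_notMem hx, zero_mul, add_zero]
      have hmeasI : Measurable fun x => (Set.Ici t).indicator
          (fun x => ENNReal.ofReal (ψ x * f x)) x :=
        ((hψcont.mul hfc).measurable.ennreal_ofReal).indicator measurableSet_Ici
      rw [hKt, lintegral_mul_const _ hmeasI, lintegral_indicator measurableSet_Ici]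
      have hIic : ∫⁻ x in Set.Ici t, ENNReal.ofReal (ψ x * f x) ∂volume
          = ∫⁻ x in Set.Ioi t, ENNReal.ofReal (ψ x * f x) ∂volume :=
        setLIntegral_congr Ioi_ae_eq_Ici.symm
      have hval : ∫⁻ x in Set.Ioi t, ENNReal.ofReal (ψ x * f x) ∂volume
          = ENNReal.ofReal (f t) := by
        rw [← ofReal_integral_eq_lintegral_ofReal (hIoi t).1 ?_, (hIoi t).2]
        refine (ae_restrict_iff' measurableSet_Ioi).mpr ?_
        filter_upwards with x hx
        exact mul_nonneg (hψ_nonneg x (le_of_lt (ht.trans hx))) (hfpos x).le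
      rw [hIic, hval]
    · have hKt : (fun x => K (x, t)) = fun x =>
          (Set.Iio t).indicator (fun x => ENNReal.ofReal (-ψ x * f x)) x * ENNReal.ofReal (w t) := by
        funext x
        by_cases hx : x ∈ Set.Iio t
        · have h2 : (x, t) ∈ S2 := ⟨hx, ht⟩
          have h1 : (x, t) ∉ S1 := by
            intro hc
            have h3 : m < t := hc.1
            linarith
          rw [hKdef]
          simp only [Set.indicator_of_mem h2, Set.indicator_of_notMem h1,
            Set.indicator_of_mem hx, one_mul, zero_mul, zero_add, mul_assoc]
        · have h2 : (x, t) ∉ S2 := by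
            intro hc
            exact hx hc.1
          have h1 : (x, t) ∉ S1 := by
            intro hc
            have h3 : m < t := hc.1
            linarith
          rw [hKdef]
          simp only [Set.indicator_of_notMem h1, Set.indicator_of_notMem h2,
            Set.indicator_of_notMem hx, zero_mul, add_zero]
      have hmeasI : Measurable fun x => (Set.Iio t).indicator
          (fun x => ENNReal.ofReal (-ψ x * f x)) x :=
        ((hψcont.neg.mul hfc).measurable.ennreal_ofReal).indicator measurableSet_Iio
      rw [hKt, lintegral_mul_const _ hmeasI, lintegral_indicator measurableSet_Iio]
      have hval : ∫⁻ x in Set.Iio t, ENNReal.ofReal (-ψ x * f x) ∂volume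
          = ENNReal.ofReal (f t) := by
        rw [← ofReal_integral_eq_lintegral_ofReal (hIio t).1 ?_, (hIio t).2]
        refine (ae_restrict_iff' measurableSet_Iio).mpr ?_
        filter_upwards with x hx
        exact mul_nonneg (neg_nonneg.mpr (hψ_nonpos x (le_trans (le_of_lt hx) ht))) (hfpos x).le
      rw [hval]
  -- final density identity
  have step6 : ∫⁻ t, ENNReal.ofReal (f t) * ENNReal.ofReal (w t) ∂volume
      = ENNReal.ofReal (∫ x, w x ∂μ) := by
    rw [ofReal_integral_eq_lintegral_ofReal hg' (Filter.Eventually.of_forall hwnn), hμdef,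
      lintegral_withDensity_eq_lintegral_mul _ hfm.ennreal_ofReal hwm]
    rfl
  have hgmmeas : Measurable fun x => ENNReal.ofReal ((g x - g m)^2) :=
    (((hg.continuous.sub continuous_const).pow 2).measurable).ennreal_ofReal
  have hmain : ∫⁻ x, ENNReal.ofReal ((g x - g m)^2) ∂μ
      ≤ ENNReal.ofReal (α * ∫ x, w x ∂μ) := by
    calc ∫⁻ x, ENNReal.ofReal ((g x - g m)^2) ∂μ
        = ∫⁻ x, ENNReal.ofReal (f x) * ENNReal.ofReal ((g x - g m)^2) ∂volume := by
          rw [hμdef, lintegral_withDensity_eq_lintegral_mul _ hfm.ennreal_ofReal hgmmeas]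
          rfl
      _ ≤ ∫⁻ x, ENNReal.ofReal α * ∫⁻ t, K (x, t) ∂volume ∂volume := lintegral_mono step2
      _ = ENNReal.ofReal α * ∫⁻ x, ∫⁻ t, K (x, t) ∂volume ∂volume :=
          lintegral_const_mul' _ _ ENNReal.ofReal_ne_top
      _ = ENNReal.ofReal α * ∫⁻ t, ∫⁻ x, K (x, t) ∂volume ∂volume := by rw [hswap]
      _ = ENNReal.ofReal α * ∫⁻ t, ENNReal.ofReal (f t) * ENNReal.ofReal (w t) ∂volume := by
          congr 1
          exact lintegral_congr step5
      _ = ENNReal.ofReal α * ENNReal.ofReal (∫ x, w x ∂μ) := by rw [step6]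
      _ = ENNReal.ofReal (α * ∫ x, w x ∂μ) := (ENNReal.ofReal_mul hα.le).symm
  have hkey : ∫ x, (g x - g m)^2 ∂μ ≤ α * ∫ x, w x ∂μ := by
    have h1 : ∫ x, (g x - g m)^2 ∂μ = (∫⁻ x, ENNReal.ofReal ((g x - g m)^2) ∂μ).toReal := by
      rw [← ofReal_integral_eq_lintegral_ofReal hXsqint
        (Filter.Eventually.of_forall fun x => sq_nonneg _),
        ENNReal.toReal_ofReal (integral_nonneg fun x => sq_nonneg _)]
    rw [h1]
    calc (∫⁻ x, ENNReal.ofReal ((g x - g m)^2) ∂μ).toReal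
        ≤ (ENNReal.ofReal (α * ∫ x, w x ∂μ)).toReal :=
          ENNReal.toReal_mono ENNReal.ofReal_ne_top hmain
      _ = α * ∫ x, w x ∂μ := ENNReal.toReal_ofReal (mul_nonneg hα.le hW0)
  exact hvar.trans hkey
end

section
/- Let X be a real random variable with density f ∈ SLC(α) for some α > 0. Then Var(X) ≤ α, with equality if and only if X is Gaussian with variance α. -/
open MeasureTheory

open Real Filter Set

open MeasureTheory Real Filter Set

section Tail

variable {G : ℝ → ℝ}

lemma tail_eq (hGi : Integrable G) (b : ℝ) :
    (∫ t in Ioi b, G t) = (∫ t in Ioi (0:ℝ), G t) - ∫ t in (0:ℝ)..b, G t := by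
  have h1 : (∫ t in Iic b, G t) + ∫ t in Ioi b, G t = ∫ t, G t :=
    intervalIntegral.integral_Iic_add_Ioi hGi.integrableOn hGi.integrableOn
  have h2 : (∫ t in Iic (0:ℝ), G t) + ∫ t in Ioi (0:ℝ), G t = ∫ t, G t :=
    intervalIntegral.integral_Iic_add_Ioi hGi.integrableOn hGi.integrableOn
  have h3 : ((∫ t in Iic b, G t) - ∫ t in Iic (0:ℝ), G t) = ∫ t in (0:ℝ)..b, G t :=
    intervalIntegral.integral_Iic_sub_Iic hGi.integrableOn hGi.integrableOn
  linarith

lemma tail_hasDerivAt (hGc : Continuous G) (hGi : Integrable G) (x : ℝ) :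
    HasDerivAt (fun b => ∫ t in Ioi b, G t) (-(G x)) x := by
  have hd : HasDerivAt (fun b => ∫ t in (0:ℝ)..b, G t) (G x) x :=
    intervalIntegral.integral_hasDerivAt_right hGi.intervalIntegrable
      hGc.stronglyMeasurable.stronglyMeasurableAtFilter
      hGc.continuousAt
  have : HasDerivAt (fun b => (∫ t in Ioi (0:ℝ), G t) - ∫ t in (0:ℝ)..b, G t) (-(G x)) x :=
    (hd.const_sub _)
  exact this.congr_of_eventuallyEq (Eventually.of_forall fun b => tail_eq hGi b)

lemma tail_tendsto_atTop (hGi : Integrable G) :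
    Tendsto (fun b => ∫ t in Ioi b, G t) atTop (nhds 0) := by
  have h1 : Tendsto (fun b => ∫ t in (0:ℝ)..b, G t) atTop (nhds (∫ t in Ioi (0:ℝ), G t)) :=
    intervalIntegral_tendsto_integral_Ioi 0 hGi.integrableOn tendsto_id
  have := (tendsto_const_nhds (x := (∫ t in Ioi (0:ℝ), G t)) (f := atTop (α := ℝ))).sub h1
  simp only [sub_self] at this
  exact this.congr fun b => (tail_eq hGi b).symm

lemma tail_tendsto_atBot (hGi : Integrable G) (hG0 : ∫ t, G t = 0) :
    Tendsto (fun b => ∫ t in Ioi b, G t) atBot (nhds 0) := by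
  have h1 : Tendsto (fun b : ℝ => ∫ t in b..(0:ℝ), G t) atBot (nhds (∫ t in Iic (0:ℝ), G t)) :=
    intervalIntegral_tendsto_integral_Iic 0 hGi.integrableOn tendsto_id
  have h2 : (∫ t in Iic (0:ℝ), G t) + (∫ t in Ioi (0:ℝ), G t) = 0 := by
    rw [intervalIntegral.integral_Iic_add_Ioi hGi.integrableOn hGi.integrableOn, hG0]
  have h3 : Tendsto (fun b : ℝ => (∫ t in Ioi (0:ℝ), G t) + ∫ t in b..(0:ℝ), G t) atBot
      (nhds ((∫ t in Ioi (0:ℝ), G t) + ∫ t in Iic (0:ℝ), G t)) := tendsto_const_nhds.add h1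
  have h4 : (∫ t in Ioi (0:ℝ), G t) + (∫ t in Iic (0:ℝ), G t) = 0 := by linarith
  rw [h4] at h3
  refine h3.congr fun b => ?_
  rw [tail_eq hGi b, intervalIntegral.integral_symm]
  ring


lemma head_tendsto_atBot (hGi : Integrable G) :
    Tendsto (fun a => ∫ t in Iic a, G t) atBot (nhds 0) := by
  have h1 : Tendsto (fun a : ℝ => ∫ t in a..(0:ℝ), G t) atBot (nhds (∫ t in Iic (0:ℝ), G t)) :=
    intervalIntegral_tendsto_integral_Iic 0 hGi.integrableOn tendsto_id
  have h2 := (tendsto_const_nhds (x := (∫ t in Iic (0:ℝ), G t)) (f := atBot (α := ℝ))).sub h1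
  simp only [sub_self] at h2
  refine h2.congr fun a => ?_
  have h3 : ((∫ t in Iic (0:ℝ), G t) - ∫ t in Iic a, G t) = ∫ t in a..(0:ℝ), G t :=
    intervalIntegral.integral_Iic_sub_Iic hGi.integrableOn hGi.integrableOn
  linarith

end Tail

section Decay

variable {f : ℝ → ℝ} {α : ℝ}

lemma psi_hasDerivAt (hf : Differentiable ℝ f) (hfpos : ∀ x, 0 < f x) (hα : 0 < α) (x : ℝ) :
    HasDerivAt (fun y => Real.log (f y) + y ^ 2 / (2 * α)) (deriv f x / f x + x / α) x := by
  have h1 : HasDerivAt (fun y => Real.log (f y)) (deriv f x / f x) x :=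
    ((hf x).hasDerivAt).log (hfpos x).ne'
  have h2 : HasDerivAt (fun y : ℝ => y ^ 2 / (2 * α)) (x / α) x := by
    have := (hasDerivAt_pow 2 x).div_const (2 * α)
    refine this.congr_deriv ?_
    field_simp
    ring
  exact h1.add h2

lemma tangent_bound (hf : Differentiable ℝ f) (hfpos : ∀ x, 0 < f x) (hα : 0 < α)
    (hslc : Antitone fun x => deriv f x / f x + x / α) (y : ℝ) :
    Real.log (f y) + y ^ 2 / (2 * α) ≤ Real.log (f 0) + (deriv f 0 / f 0) * y := by
  set ψ : ℝ → ℝ := fun y => Real.log (f y) + y ^ 2 / (2 * α) with hψ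
  set g : ℝ → ℝ := fun x => deriv f x / f x + x / α with hg
  have hd : ∀ x, HasDerivAt ψ (g x) x := fun x => psi_hasDerivAt hf hfpos hα x
  have hg0 : g 0 = deriv f 0 / f 0 := by simp [hg]
  rcases lt_trichotomy y 0 with hy | hy | hy
  · obtain ⟨c, hc, hslope⟩ := exists_hasDerivAt_eq_slope ψ g hy
      (fun x _ => (hd x).continuousAt.continuousWithinAt) (fun x _ => hd x)
    have hgc : g 0 ≤ g c := hslc hc.2.le
    rw [hslope] at hgc
    have h0y : (0:ℝ) - y > 0 := by linarith
    rw [le_div_iff₀ h0y] at hgc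
    have : ψ y ≤ ψ 0 + g 0 * y := by nlinarith
    simpa [hψ, hg0] using this
  · simp [hψ, hy, hg0]
  · obtain ⟨c, hc, hslope⟩ := exists_hasDerivAt_eq_slope ψ g hy
      (fun x _ => (hd x).continuousAt.continuousWithinAt) (fun x _ => hd x)
    have hgc : g c ≤ g 0 := hslc hc.1.le
    rw [hslope] at hgc
    rw [div_le_iff₀ (by linarith : (0:ℝ) < y - 0)] at hgc
    have : ψ y ≤ ψ 0 + g 0 * y := by nlinarith
    simpa [hψ, hg0] using this

lemma f_le_gauss (hf : Differentiable ℝ f) (hfpos : ∀ x, 0 < f x) (hα : 0 < α)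
    (hslc : Antitone fun x => deriv f x / f x + x / α) (y : ℝ) :
    f y ≤ Real.exp (Real.log (f 0) + (deriv f 0 / f 0) * y - y ^ 2 / (2 * α)) := by
  have h := tangent_bound hf hfpos hα hslc y
  have : f y = Real.exp (Real.log (f y)) := (Real.exp_log (hfpos y)).symm
  rw [this]
  exact Real.exp_le_exp.2 (by linarith)

lemma quad_tendsto_atTop (hα : 0 < α) (C B : ℝ) :
    Tendsto (fun y : ℝ => C + B * y - y ^ 2 / (2 * α)) atTop atBot := by
  have h1 : Tendsto (fun y : ℝ => y * (B - y / (2 * α))) atTop atBot := by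
    apply Tendsto.atTop_mul_atBot₀ tendsto_id
    apply tendsto_atBot_add_const_left
    exact tendsto_neg_atBot_iff.2 ((tendsto_id.atTop_div_const (by positivity)))
  have h2 := tendsto_atBot_add_const_left _ C h1
  refine h2.congr fun y => by ring
  
lemma quad_tendsto_atBot (hα : 0 < α) (C B : ℝ) :
    Tendsto (fun y : ℝ => C + B * y - y ^ 2 / (2 * α)) atBot atBot := by
  have h1 : Tendsto (fun y : ℝ => y * (B - y / (2 * α))) atBot atBot := by
    apply Tendsto.atBot_mul_atTop₀ tendsto_id
    apply tendsto_atTop_add_const_left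
    refine tendsto_neg_atTop_iff.2 ((tendsto_id.atBot_div_const (by positivity)))
  have h2 := tendsto_atBot_add_const_left _ C h1
  refine h2.congr fun y => by ring

lemma f_tendsto_atTop (hf : Differentiable ℝ f) (hfpos : ∀ x, 0 < f x) (hα : 0 < α)
    (hslc : Antitone fun x => deriv f x / f x + x / α) :
    Tendsto f atTop (nhds 0) := by
  have hb : Tendsto (fun y => Real.exp (Real.log (f 0) + (deriv f 0 / f 0) * y - y ^ 2 / (2 * α)))
      atTop (nhds 0) :=
    Real.tendsto_exp_atBot.comp (quad_tendsto_atTop hα _ _)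
  refine tendsto_of_tendsto_of_tendsto_of_le_of_le tendsto_const_nhds hb
    (fun y => (hfpos y).le) (fun y => f_le_gauss hf hfpos hα hslc y)

lemma f_tendsto_atBot (hf : Differentiable ℝ f) (hfpos : ∀ x, 0 < f x) (hα : 0 < α)
    (hslc : Antitone fun x => deriv f x / f x + x / α) :
    Tendsto f atBot (nhds 0) := by
  have hb : Tendsto (fun y => Real.exp (Real.log (f 0) + (deriv f 0 / f 0) * y - y ^ 2 / (2 * α)))
      atBot (nhds 0) :=
    Real.tendsto_exp_atBot.comp (quad_tendsto_atBot hα _ _)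
  refine tendsto_of_tendsto_of_tendsto_of_le_of_le tendsto_const_nhds hb
    (fun y => (hfpos y).le) (fun y => f_le_gauss hf hfpos hα hslc y)

end Decay

/-- For a real random variable with density `f ∈ SLC(α)`, `Var(X) ≤ α`, with equality if
and only if `X` is Gaussian with variance `α`. -/
theorem slc_variance_le
    (f : ℝ → ℝ) (hf : Differentiable ℝ f) (hfpos : ∀ x, 0 < f x)
    (α : ℝ) (hα : 0 < α)
    (hslc : Antitone fun x => deriv f x / f x + x / α)
    (hprob : ∫ x, f x = 1)
    (μ : ℝ) (hmeanInt : Integrable fun x => x * f x) (hmean : ∫ x, x * f x = μ)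
    (hvarInt : Integrable fun x => (x - μ) ^ 2 * f x) :
    (∫ x, (x - μ) ^ 2 * f x) ≤ α ∧
      ((∫ x, (x - μ) ^ 2 * f x) = α ↔
        ∀ x, f x = (Real.sqrt (2 * Real.pi * α))⁻¹ * Real.exp (-(x - μ) ^ 2 / (2 * α))) := by
  have hfc : Continuous f := hf.continuous
  have hfInt : Integrable f := by
    by_contra hc
    rw [integral_undef hc] at hprob; exact one_ne_zero hprob.symm
  set g : ℝ → ℝ := fun x => deriv f x / f x + x / α with hgdef
  set G : ℝ → ℝ := fun t => (t - μ) * f t with hGdef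
  have hGc : Continuous G := (continuous_id.sub continuous_const).mul hfc
  have hGi : Integrable G := by
    have hEq : G = fun t => t * f t - μ * f t := by funext t; simp only [hGdef]; ring
    rw [hEq]; exact hmeanInt.sub (hfInt.const_mul μ)
  have hG0 : ∫ t, G t = 0 := by
    have hEq : ∫ t, G t = (∫ t, t * f t) - ∫ t, μ * f t := by
      rw [← integral_sub hmeanInt (hfInt.const_mul μ)]
      congr 1; funext t; simp only [hGdef]; ring
    rw [hEq, hmean, integral_const_mul, hprob]; ring
  set h : ℝ → ℝ := fun x => ∫ t in Ioi x, G t with hhdef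
  have hhd : ∀ x, HasDerivAt h (-(G x)) x := tail_hasDerivAt hGc hGi
  have hhc : Continuous h :=
    continuous_iff_continuousAt.2 fun x => (hhd x).continuousAt
  have hhTop : Tendsto h atTop (nhds 0) := tail_tendsto_atTop hGi
  have hhBot : Tendsto h atBot (nhds 0) := tail_tendsto_atBot hGi hG0
  set u : ℝ → ℝ := fun x => α * f x - h x with hudef
  have hud : ∀ x, HasDerivAt u (f x * (α * g x - μ)) x := by
    intro x
    have h1 : HasDerivAt (fun y => α * f y) (α * deriv f x) x := ((hf x).hasDerivAt).const_mul α
    have h2 := h1.sub (hhd x)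
    have h3 : α * deriv f x - -G x = f x * (α * g x - μ) := by
      have hfx : f x ≠ 0 := (hfpos x).ne'
      simp only [hgdef, hGdef]
      field_simp
      ring
    rw [h3] at h2; exact h2
  have hfTop : Tendsto f atTop (nhds 0) := f_tendsto_atTop hf hfpos hα hslc
  have hfBot : Tendsto f atBot (nhds 0) := f_tendsto_atBot hf hfpos hα hslc
  have huTop : Tendsto u atTop (nhds 0) := by
    have := (hfTop.const_mul α).sub hhTop
    simpa using this
  have huBot : Tendsto u atBot (nhds 0) := by
    have := (hfBot.const_mul α).sub hhBot
    simpa using this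
  have huc : Continuous u := (continuous_const.mul hfc).sub hhc
  -- u is nonnegative
  have hu0 : ∀ x, 0 ≤ u x := by
    intro x₀
    rcases le_total μ (α * g x₀) with hc | hc
    · have hmono : MonotoneOn u (Iic x₀) := by
        apply monotoneOn_of_deriv_nonneg (convex_Iic x₀) huc.continuousOn
        · intro y _; exact (hud y).differentiableAt.differentiableWithinAt
        · intro y hy
          rw [(hud y).deriv]
          have hyx : y ≤ x₀ := by
            rw [interior_Iic] at hy; exact le_of_lt hy
          have : g x₀ ≤ g y := hslc hyx
          have h4 : μ ≤ α * g y := le_trans hc (by nlinarith)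
          nlinarith [(hfpos y).le]
      have hev : ∀ᶠ y in atBot, u y ≤ u x₀ := by
        filter_upwards [eventually_le_atBot x₀] with y hy
        exact hmono hy (mem_Iic.2 le_rfl) hy
      exact le_of_tendsto huBot hev
    · have hanti : AntitoneOn u (Ici x₀) := by
        apply antitoneOn_of_deriv_nonpos (convex_Ici x₀) huc.continuousOn
        · intro y _; exact (hud y).differentiableAt.differentiableWithinAt
        · intro y hy
          rw [(hud y).deriv]
          have hyx : x₀ ≤ y := by
            rw [interior_Ici] at hy; exact le_of_lt hy
          have : g y ≤ g x₀ := hslc hyx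
          have h4 : α * g y ≤ μ := le_trans (by nlinarith) hc
          nlinarith [(hfpos y).le]
      have hev : ∀ᶠ y in atTop, u y ≤ u x₀ := by
        filter_upwards [eventually_ge_atTop x₀] with y hy
        exact hanti (mem_Ici.2 le_rfl) hy hy
      exact le_of_tendsto huTop hev
  -- h is bounded by α f and nonnegative
  have hhx : ∀ x, h x ≤ α * f x := by
    intro x; have := hu0 x; simp only [hudef] at this; linarith
  have hIic : ∀ x, h x = -∫ t in Iic x, G t := by
    intro x
    have h5 := intervalIntegral.integral_Iic_add_Ioi (b := x) (μ := volume)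
      hGi.integrableOn hGi.integrableOn
    rw [hG0] at h5
    simp only [hhdef]; linarith
  have hh0 : ∀ x, 0 ≤ h x := by
    intro x
    rcases le_total μ x with hx | hx
    · apply setIntegral_nonneg measurableSet_Ioi
      intro t ht
      have : μ ≤ t := le_trans hx (le_of_lt ht)
      simp only [hGdef]
      exact mul_nonneg (by linarith) (hfpos t).le
    · rw [hIic x]
      have h6 : (∫ t in Iic x, G t) ≤ 0 := by
        apply setIntegral_nonpos measurableSet_Iic
        intro t ht
        have : t ≤ μ := le_trans ht hx
        simp only [hGdef]
        exact mul_nonpos_of_nonpos_of_nonneg (by linarith) (hfpos t).le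
      linarith
  have hhInt : Integrable h := by
    refine (hfInt.const_mul α).mono' hhc.aestronglyMeasurable (ae_of_all _ fun x => ?_)
    rw [Real.norm_eq_abs, abs_of_nonneg (hh0 x)]
    exact hhx x
  -- the variance identity : ∫ (x-μ)² f = ∫ h
  set V : ℝ := ∫ x, (x - μ) ^ 2 * f x with hVdef
  have hvarc : Continuous fun x : ℝ => (x - μ) ^ 2 * f x :=
    (((continuous_id.sub continuous_const).pow 2)).mul hfc
  have hFTC : ∀ a b : ℝ, (∫ x in a..b, (h x - (x - μ) ^ 2 * f x)) =
      (b - μ) * h b - (a - μ) * h a := by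
    intro a b
    have hP : ∀ x ∈ Set.uIcc a b, HasDerivAt (fun x => (x - μ) * h x)
        (h x - (x - μ) ^ 2 * f x) x := by
      intro x _
      have h1 : HasDerivAt (fun x : ℝ => x - μ) 1 x := (hasDerivAt_id x).sub_const μ
      have h2 := h1.mul (hhd x)
      have h3 : 1 * h x + (x - μ) * -G x = h x - (x - μ) ^ 2 * f x := by
        simp only [hGdef]; ring
      rw [h3] at h2; exact h2
    refine intervalIntegral.integral_eq_sub_of_hasDerivAt hP ?_
    exact ((hhc.sub hvarc).intervalIntegrable _ _)
  have hhVarInt : Integrable (fun x => h x - (x - μ) ^ 2 * f x) := hhInt.sub hvarInt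
  have hlim1 : Tendsto (fun b : ℝ => ∫ x in (-b)..b, (h x - (x - μ) ^ 2 * f x)) atTop
      (nhds ((∫ x, h x) - V)) := by
    have h7 := intervalIntegral_tendsto_integral hhVarInt tendsto_neg_atTop_atBot tendsto_id
    rw [integral_sub hhInt hvarInt] at h7
    exact h7
  have hbTop : Tendsto (fun b : ℝ => (b - μ) * h b) atTop (nhds 0) := by
    have hH : Tendsto (fun b : ℝ => ∫ t in Ioi b, (t - μ) ^ 2 * f t) atTop (nhds 0) :=
      tail_tendsto_atTop hvarInt
    refine tendsto_of_tendsto_of_tendsto_of_le_of_le' tendsto_const_nhds hH ?_ ?_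
    · filter_upwards [eventually_ge_atTop μ] with b hb
      exact mul_nonneg (by linarith) (hh0 b)
    · filter_upwards [eventually_ge_atTop μ] with b hb
      have heq : (b - μ) * h b = ∫ t in Ioi b, (b - μ) * G t := by
        rw [integral_const_mul]
      rw [heq]
      apply setIntegral_mono_on ((hGi.const_mul _).integrableOn)
        hvarInt.integrableOn measurableSet_Ioi
      intro t ht
      have hbt : b ≤ t := le_of_lt ht
      simp only [hGdef]
      have h1 : (0:ℝ) ≤ t - μ := by linarith
      have h2 := mul_le_mul_of_nonneg_right (sub_le_sub_right hbt μ)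
        (mul_nonneg h1 (hfpos t).le)
      nlinarith [h2]
  have hbBot : Tendsto (fun a : ℝ => (a - μ) * h a) atBot (nhds 0) := by
    have hH : Tendsto (fun a : ℝ => ∫ t in Iic a, (t - μ) ^ 2 * f t) atBot (nhds 0) :=
      head_tendsto_atBot hvarInt
    have hHneg : Tendsto (fun a : ℝ => -∫ t in Iic a, (t - μ) ^ 2 * f t) atBot (nhds 0) := by
      have := hH.neg; simpa using this
    refine tendsto_of_tendsto_of_tendsto_of_le_of_le' hHneg tendsto_const_nhds ?_ ?_
    · filter_upwards [eventually_le_atBot μ] with a ha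
      have heq : (a - μ) * h a = ∫ t in Iic a, (μ - a) * G t := by
        rw [integral_const_mul, hIic a]; ring
      rw [heq, ← integral_neg]
      apply setIntegral_mono_on hvarInt.integrableOn.neg
        ((hGi.const_mul _).integrableOn) measurableSet_Iic
      intro t ht
      have hta : t ≤ a := ht
      simp only [hGdef, Pi.neg_apply]
      have h1 : (0:ℝ) ≤ μ - t := by linarith
      have h2 : μ - a ≤ μ - t := by linarith
      have h3 := mul_le_mul_of_nonneg_right h2 (mul_nonneg h1 (hfpos t).le)
      nlinarith [h3]
    · filter_upwards [eventually_le_atBot μ] with a ha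
      exact mul_nonpos_of_nonpos_of_nonneg (by linarith) (hh0 a)
  have hVar_eq : V = ∫ x, h x := by
    have h2 : Tendsto (fun b : ℝ => (b - μ) * h b - ((-b) - μ) * h (-b)) atTop (nhds 0) := by
      have := hbTop.sub (hbBot.comp tendsto_neg_atTop_atBot)
      simpa using this
    have h3 : (fun b : ℝ => ∫ x in (-b)..b, (h x - (x - μ) ^ 2 * f x)) =
        fun b : ℝ => (b - μ) * h b - ((-b) - μ) * h (-b) := funext fun b => hFTC (-b) b
    rw [h3] at hlim1
    have h4 := tendsto_nhds_unique hlim1 h2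
    linarith
  have hmain : V ≤ α := by
    rw [hVar_eq]
    calc (∫ x, h x) ≤ ∫ x, α * f x := integral_mono hhInt (hfInt.const_mul α) hhx
    _ = α := by rw [integral_const_mul, hprob, mul_one]
  have hα' : α ≠ 0 := ne_of_gt hα
  refine ⟨hmain, ?_, ?_⟩
  · -- equality implies Gaussian
    intro hVα
    have h8 : ∫ x, h x = α := by rw [← hVar_eq]; exact hVα
    have hIntEq : ∫ x, u x = 0 := by
      have h9 : ∫ x, u x = (∫ x, α * f x) - ∫ x, h x := by
        simp only [hudef]
        exact integral_sub (hfInt.const_mul α) hhInt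
      rw [h9, integral_const_mul, hprob, h8]; ring
    have hae : u =ᵐ[volume] 0 :=
      (integral_eq_zero_iff_of_nonneg hu0 ((hfInt.const_mul α).sub hhInt)).1 hIntEq
    have huzero : u = 0 := (Continuous.ae_eq_iff_eq volume huc continuous_const).1 hae
    have hhf : ∀ x, h x = α * f x := by
      intro x
      have h12 := congrFun huzero x
      simp only [hudef, Pi.zero_apply] at h12
      linarith
    have hderivf : ∀ x, deriv f x = -(x - μ) * f x / α := by
      intro x
      have hfun : (fun y => α * f y) = h := funext fun y => (hhf y).symm
      have h1 : HasDerivAt (fun y => α * f y) (α * deriv f x) x := ((hf x).hasDerivAt).const_mul α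
      rw [hfun] at h1
      have h3 : α * deriv f x = -G x := h1.unique (hhd x)
      simp only [hGdef] at h3
      field_simp
      linarith
    set c : ℝ := f μ with hcdef
    have hF : ∀ x, f x * Real.exp ((x - μ) ^ 2 / (2 * α)) = c := by
      have hFd : ∀ x, HasDerivAt (fun x => f x * Real.exp ((x - μ) ^ 2 / (2 * α))) 0 x := by
        intro x
        have hq : HasDerivAt (fun x : ℝ => (x - μ) ^ 2 / (2 * α)) ((x - μ) / α) x := by
          have h1 : HasDerivAt (fun x : ℝ => x - μ) 1 x := (hasDerivAt_id x).sub_const μ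
          have h2 := (h1.pow 2).div_const (2 * α)
          refine h2.congr_deriv ?_
          field_simp
          ring
        have h4 := ((hf x).hasDerivAt).mul hq.exp
        have h5 : deriv f x * Real.exp ((x - μ) ^ 2 / (2 * α)) +
            f x * (Real.exp ((x - μ) ^ 2 / (2 * α)) * ((x - μ) / α)) = 0 := by
          rw [hderivf x]; field_simp; ring
        rw [h5] at h4
        exact h4
      intro x
      have h13 := is_const_of_deriv_eq_zero (fun y => (hFd y).differentiableAt)
        (fun y => (hFd y).deriv) x μ
      simpa using h13
    have hfx : ∀ x, f x = c * Real.exp (-(x - μ) ^ 2 / (2 * α)) := by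
      intro x
      have h6 := hF x
      rw [neg_div, Real.exp_neg]
      rw [eq_comm, inv_eq_one_div, mul_comm, div_mul_eq_mul_div, div_eq_iff (Real.exp_ne_zero _)]
      linarith [h6]
    have hshape : (fun x : ℝ => Real.exp (-(x - μ) ^ 2 / (2 * α))) =
        fun x => (fun y : ℝ => Real.exp (-(2*α)⁻¹ * y ^ 2)) (x - μ) := by
      funext x
      simp only
      congr 1
      field_simp
    have hint : ∫ x, c * Real.exp (-(x - μ) ^ 2 / (2 * α)) = c * Real.sqrt (2 * Real.pi * α) := by
      rw [integral_const_mul]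
      congr 1
      rw [hshape, integral_sub_right_eq_self (fun y : ℝ => Real.exp (-(2*α)⁻¹ * y ^ 2)) μ,
        integral_gaussian ((2*α)⁻¹)]
      congr 1
      field_simp
    have h11 : c * Real.sqrt (2 * Real.pi * α) = 1 := by
      rw [← hint, ← hprob]
      congr 1
      funext x
      exact (hfx x).symm
    have hsqpos : 0 < Real.sqrt (2 * Real.pi * α) :=
      Real.sqrt_pos.2 (by positivity)
    have hc : c = (Real.sqrt (2 * Real.pi * α))⁻¹ :=
      eq_inv_of_mul_eq_one_right (by linear_combination h11)
    intro x
    rw [hfx x, hc]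
  · -- Gaussian implies equality
    intro hGauss
    have hderivf : ∀ x, deriv f x = f x * (-(x - μ) / α) := by
      intro x
      have hfun : f = fun x => (Real.sqrt (2 * Real.pi * α))⁻¹ *
          Real.exp (-(x - μ) ^ 2 / (2 * α)) := funext hGauss
      have hq : HasDerivAt (fun x : ℝ => -(x - μ) ^ 2 / (2 * α)) (-(x - μ) / α) x := by
        have h1 : HasDerivAt (fun x : ℝ => x - μ) 1 x := (hasDerivAt_id x).sub_const μ
        have h2 := ((h1.pow 2).neg).div_const (2 * α)
        refine h2.congr_deriv ?_
        field_simp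
        ring
      have h3 := hq.exp.const_mul ((Real.sqrt (2 * Real.pi * α))⁻¹)
      have h4 : HasDerivAt f ((Real.sqrt (2 * Real.pi * α))⁻¹ *
          (Real.exp (-(x - μ) ^ 2 / (2 * α)) * (-(x - μ) / α))) x := by
        rw [hfun]
        exact h3
      rw [h4.deriv, hGauss x]
      ring
    have hgx : ∀ x, α * g x - μ = 0 := by
      intro x
      simp only [hgdef]
      rw [hderivf x]
      have hfx : f x ≠ 0 := (hfpos x).ne'
      field_simp
      ring
    have hu' : ∀ x, deriv u x = 0 := by
      intro x
      rw [(hud x).deriv, hgx x, mul_zero]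
    have hconst : ∀ x, u x = u 0 := fun x =>
      is_const_of_deriv_eq_zero (fun y => (hud y).differentiableAt) hu' x 0
    have hu00 : u 0 = 0 := by
      have h1 : Tendsto u atTop (nhds (u 0)) := by
        have h2 : u = fun _ => u 0 := funext hconst
        nth_rewrite 1 [h2]
        exact tendsto_const_nhds
      exact (tendsto_nhds_unique h1 huTop)
    have hhf : (fun x => h x) = fun x => α * f x := by
      funext x
      have h14 := hconst x
      rw [hu00] at h14
      simp only [hudef] at h14
      linarith
    rw [hVar_eq]
    calc (∫ x, h x) = ∫ x, α * f x := by rw [hhf]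
    _ = α := by rw [integral_const_mul, hprob, mul_one]
end

section
/- Let X be a real random variable with mean μ and density f ∈ SLC(α) with all moments finite. Then for every r ≥ 1, E[(X−μ)^{2r}] ≤ (2r)!/r! · (α/2)^r, i.e. the even centred moments are dominated by those of the Gaussian N(μ, α). -/
open MeasureTheory Filter Set

/-- Integral Chebyshev/FKG correlation inequality: a monotone and an antitone function
are negatively correlated with respect to any finite nonnegative density. -/
lemma slc_cheb_corr {g u f : ℝ → ℝ} (hg : Monotone g) (hu : Antitone u) (hf0 : ∀ x, 0 ≤ f x)
    (hfi : Integrable f) (hgf : Integrable (fun x => g x * f x))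
    (huf : Integrable (fun x => u x * f x)) (hguf : Integrable (fun x => g x * (u x * f x))) :
    (∫ x, g x * (u x * f x)) * (∫ x, f x) ≤ (∫ x, g x * f x) * (∫ x, u x * f x) := by
  have key : ∫ p : ℝ × ℝ, ((g p.1 - g p.2) * (u p.1 - u p.2) * (f p.1 * f p.2))
      ∂((volume : Measure ℝ).prod volume) ≤ 0 := by
    apply integral_nonpos
    intro p
    have h1 : (g p.1 - g p.2) * (u p.1 - u p.2) ≤ 0 := by
      rcases le_total p.1 p.2 with h | h
      · exact mul_nonpos_of_nonpos_of_nonneg (by linarith [hg h]) (by linarith [hu h])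
      · exact mul_nonpos_of_nonneg_of_nonpos (by linarith [hg h]) (by linarith [hu h])
    exact mul_nonpos_of_nonpos_of_nonneg h1 (mul_nonneg (hf0 _) (hf0 _))
  have hA : Integrable (fun p : ℝ × ℝ => (g p.1 * (u p.1 * f p.1)) * f p.2)
      ((volume : Measure ℝ).prod volume) := hguf.mul_prod hfi
  have hB : Integrable (fun p : ℝ × ℝ => (g p.1 * f p.1) * (u p.2 * f p.2))
      ((volume : Measure ℝ).prod volume) := hgf.mul_prod huf
  have hC : Integrable (fun p : ℝ × ℝ => (u p.1 * f p.1) * (g p.2 * f p.2))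
      ((volume : Measure ℝ).prod volume) := huf.mul_prod hgf
  have hD : Integrable (fun p : ℝ × ℝ => f p.1 * (g p.2 * (u p.2 * f p.2)))
      ((volume : Measure ℝ).prod volume) := hfi.mul_prod hguf
  have expand : (fun p : ℝ × ℝ => (g p.1 - g p.2) * (u p.1 - u p.2) * (f p.1 * f p.2))
      = fun p : ℝ × ℝ => (((g p.1 * (u p.1 * f p.1)) * f p.2
          - (g p.1 * f p.1) * (u p.2 * f p.2))
          - (u p.1 * f p.1) * (g p.2 * f p.2)) + f p.1 * (g p.2 * (u p.2 * f p.2)) := by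
    funext p; ring
  rw [expand] at key
  have eAB := integral_sub hA hB
  have eABC := integral_sub (hA.sub hB) hC
  simp only [Pi.sub_apply] at eABC
  have eABCD := integral_add ((hA.sub hB).sub hC) hD
  simp only [Pi.sub_apply] at eABCD
  rw [eABCD, eABC, eAB, integral_prod_mul (fun x => g x * (u x * f x)) f,
    integral_prod_mul (fun x => g x * f x) (fun x => u x * f x),
    integral_prod_mul (fun x => u x * f x) (fun x => g x * f x),
    integral_prod_mul f (fun x => g x * (u x * f x))] at key
  linarith [mul_comm (∫ x, f x) (∫ x, g x * (u x * f x)),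
    mul_comm (∫ x, u x * f x) (∫ x, g x * f x)]

/-- Gaussian moment domination for strongly log-concave densities: if `f ∈ SLC(α)` with
mean `μ` and all moments finite, then for every `r ≥ 1`,
`E[(X-μ)^{2r}] ≤ (2r)!/r! · (α/2)^r`. -/
theorem slc_moment_bound
    (f : ℝ → ℝ) (hf : Differentiable ℝ f) (hfpos : ∀ x, 0 < f x)
    (α : ℝ) (hα : 0 < α)
    (hslc : Antitone fun x => deriv f x / f x + x / α)
    (hprob : ∫ x, f x = 1)
    (μ : ℝ) (hmeanInt : Integrable fun x => x * f x) (hmean : ∫ x, x * f x = μ)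
    (hmom : ∀ n : ℕ, Integrable fun x => (x - μ) ^ n * f x) :
    ∀ r : ℕ, 1 ≤ r →
      (∫ x, (x - μ) ^ (2 * r) * f x) ≤
        (((2 * r).factorial : ℝ) / (r.factorial : ℝ)) * (α / 2) ^ r := by
  have hfc : Continuous f := hf.continuous
  have hfne : ∀ x, f x ≠ 0 := fun x => (hfpos x).ne'
  set v : ℝ → ℝ := fun x => deriv f x / f x + x / α with hv
  have hva : Antitone v := hslc
  set u : ℝ → ℝ := fun x => v x - μ / α with hu
  have hua : Antitone u := fun x y h => by
    simp only [hu]; have := hva h; simp only [hv] at this ⊢; linarith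
  have huf_eq : ∀ x, u x * f x = deriv f x + (x - μ) / α * f x := by
    intro x
    simp only [hu, hv]
    field_simp [hfne x]
    ring
  have hd : ∀ x, deriv f x = (u x - (x - μ) / α) * f x := by
    intro x
    rw [sub_mul, huf_eq x]
    ring
  -- integrability basics
  have hfint : Integrable f := by simpa using hmom 0
  have h1int : Integrable (fun x => (x - μ) * f x) := by simpa using hmom 1
  -- interval integrability of deriv f and polynomial multiples
  have hloc : ∀ c d : ℝ, IntervalIntegrable (deriv f) volume c d := by
    intro c d
    have h2 : IntervalIntegrable (fun x => v x - x / α) volume c d :=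
      hva.intervalIntegrable.sub ((continuous_id.div_const α).intervalIntegrable c d)
    have h3 := h2.mul_continuousOn (g := f) hfc.continuousOn
    have : (fun x => (v x - x / α) * f x) = deriv f := by
      funext x
      have := hd x
      have hμ : u x - (x - μ) / α = v x - x / α := by
        simp only [hu]; ring
      rw [this, hμ]
    rwa [this] at h3
  have hlocP : ∀ (g : ℝ → ℝ), Continuous g →
      ∀ c d : ℝ, IntervalIntegrable (fun x => g x * deriv f x) volume c d :=
    fun g hg c d => (hloc c d).continuousOn_mul hg.continuousOn
  -- eventual sign of deriv f
  obtain ⟨b, hbμ, hbsign⟩ : ∃ b, μ < b ∧ ∀ x, b ≤ x → deriv f x ≤ 0 := by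
    refine ⟨max (μ + 1) (μ + α * u (μ + 1)),
      lt_of_lt_of_le (by linarith) (le_max_left _ _), fun x hx => ?_⟩
    have h1 : u x ≤ u (μ + 1) := hua (le_trans (le_max_left _ _) hx)
    have h2 : μ + α * u (μ + 1) ≤ x := le_trans (le_max_right _ _) hx
    have h3 : u (μ + 1) ≤ (x - μ) / α := by
      rw [le_div_iff₀ hα]; nlinarith
    rw [hd x]
    exact mul_nonpos_of_nonpos_of_nonneg (sub_nonpos.mpr (h1.trans h3)) (hfpos x).le
  obtain ⟨a, haμ, hasign⟩ : ∃ a, a < μ ∧ ∀ x, x ≤ a → 0 ≤ deriv f x := by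
    refine ⟨min (μ - 1) (μ + α * u (μ - 1)),
      lt_of_le_of_lt (min_le_left _ _) (by linarith), fun x hx => ?_⟩
    have h1 : u (μ - 1) ≤ u x := hua (le_trans hx (min_le_left _ _))
    have h2 : x ≤ μ + α * u (μ - 1) := le_trans hx (min_le_right _ _)
    have h3 : (x - μ) / α ≤ u (μ - 1) := by
      rw [div_le_iff₀ hα]; nlinarith
    rw [hd x]
    exact mul_nonneg (sub_nonneg.mpr (h3.trans h1)) (hfpos x).le
  -- key integrability: polynomial times deriv f is integrable
  have hkey : ∀ k : ℕ, Integrable (fun x => (x - μ) ^ k * deriv f x) := by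
    intro k
    set C : ℝ := ∫ x, ‖(x - μ) ^ (k - 1) * f x‖ with hC
    have hsub : ∀ m M : ℝ, m ≤ M → ∫ x in Ioc m M, (x - μ) ^ (k - 1) * f x ≤ C := by
      intro m M hmM
      calc ∫ x in Ioc m M, (x - μ) ^ (k - 1) * f x
          ≤ ∫ x in Ioc m M, ‖(x - μ) ^ (k - 1) * f x‖ := by
            apply setIntegral_mono_on ((hmom (k - 1)).integrableOn)
              ((hmom (k - 1)).norm.integrableOn) measurableSet_Ioc
            intro x _
            exact le_abs_self _
        _ ≤ C := setIntegral_le_integral (hmom (k - 1)).norm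
            (Eventually.of_forall fun x => norm_nonneg _)
    have hsub' : ∀ m M : ℝ, m ≤ M → ∫ x in Ioc m M, (μ - x) ^ (k - 1) * f x ≤ C := by
      intro m M hmM
      calc ∫ x in Ioc m M, (μ - x) ^ (k - 1) * f x
          ≤ ∫ x in Ioc m M, ‖(x - μ) ^ (k - 1) * f x‖ := by
            apply setIntegral_mono_on
            · have : Integrable (fun x => (μ - x) ^ (k - 1) * f x) := by
                have e : (fun x => (μ - x) ^ (k - 1) * f x)
                    = fun x => (-1 : ℝ) ^ (k - 1) * ((x - μ) ^ (k - 1) * f x) := by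
                  funext x; rw [← mul_assoc, ← mul_pow]; ring_nf
                rw [e]; exact (hmom (k - 1)).const_mul _
              exact this.integrableOn
            · exact (hmom (k - 1)).norm.integrableOn
            · exact measurableSet_Ioc
            · intro x _
              have h1 : (μ - x) ^ (k - 1) ≤ |(x - μ) ^ (k - 1)| := by
                calc (μ - x) ^ (k - 1) ≤ |(μ - x) ^ (k - 1)| := le_abs_self _
                  _ = |(x - μ) ^ (k - 1)| := by rw [abs_pow, abs_pow, abs_sub_comm]
              have h2 : ‖(x - μ) ^ (k - 1) * f x‖ = |(x - μ) ^ (k - 1)| * f x := by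
                rw [Real.norm_eq_abs, abs_mul, abs_of_nonneg (hfpos x).le]
              rw [h2]
              exact mul_le_mul_of_nonneg_right h1 (hfpos x).le
        _ ≤ C := setIntegral_le_integral (hmom (k - 1)).norm
            (Eventually.of_forall fun x => norm_nonneg _)
    have hder : ∀ x : ℝ, HasDerivAt (fun y => (y - μ) ^ k) ((k : ℝ) * (x - μ) ^ (k - 1)) x := by
      intro x
      have := ((hasDerivAt_id x).sub_const μ).pow k
      simpa [Pi.pow_def] using this
    have hderL : ∀ x : ℝ, HasDerivAt (fun y => (μ - y) ^ k) (-((k : ℝ) * (μ - x) ^ (k - 1))) x := by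
      intro x
      have := ((hasDerivAt_const x μ).sub (hasDerivAt_id x)).pow k
      simpa [Pi.pow_def, Pi.sub_def] using this
    have hIoi : IntegrableOn (fun x => (x - μ) ^ k * deriv f x) (Ioi b) := by
      apply integrableOn_Ioi_of_intervalIntegral_norm_bounded
        ((b - μ) ^ k * f b + (k : ℝ) * C) b
        (fun M : ℝ => ((hlocP (fun x => (x - μ) ^ k)
          (by exact (continuous_id.sub continuous_const).pow k) b M).1)) tendsto_id
      filter_upwards [eventually_ge_atTop b] with M hM
      have e1 : ∫ x in b..M, ‖(x - μ) ^ k * deriv f x‖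
          = ∫ x in b..M, -((x - μ) ^ k * deriv f x) := by
        apply intervalIntegral.integral_congr
        intro x hx
        rw [uIcc_of_le hM] at hx
        have h0 : (0 : ℝ) ≤ (x - μ) ^ k := pow_nonneg (by linarith [hx.1]) k
        have h1 : deriv f x ≤ 0 := hbsign x hx.1
        show ‖(x - μ) ^ k * deriv f x‖ = -((x - μ) ^ k * deriv f x)
        rw [Real.norm_eq_abs, abs_of_nonpos (mul_nonpos_of_nonneg_of_nonpos h0 h1)]
      rw [e1, intervalIntegral.integral_neg]
      have parts := intervalIntegral.integral_mul_deriv_eq_deriv_mul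
        (u := fun y => (y - μ) ^ k) (u' := fun y => (k : ℝ) * (y - μ) ^ (k - 1))
        (v := f) (v' := deriv f)
        (fun x _ => hder x) (fun x _ => (hf x).hasDerivAt)
        (Continuous.intervalIntegrable
          (by exact continuous_const.mul ((continuous_id.sub continuous_const).pow (k - 1))) _ _)
        (hloc b M)
      rw [parts]
      have hfM : 0 ≤ (M - μ) ^ k * f M :=
        mul_nonneg (pow_nonneg (by linarith) k) (hfpos M).le
      have hbnd : ∫ x in b..M, (k : ℝ) * (x - μ) ^ (k - 1) * f x ≤ (k : ℝ) * C := by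
        have e2 : ∫ x in b..M, (k : ℝ) * (x - μ) ^ (k - 1) * f x
            = (k : ℝ) * ∫ x in b..M, (x - μ) ^ (k - 1) * f x := by
          simp only [mul_assoc]
          rw [intervalIntegral.integral_const_mul]
        rw [e2, intervalIntegral.integral_of_le hM]
        exact mul_le_mul_of_nonneg_left (hsub b M hM) (Nat.cast_nonneg k)
      linarith
    have hIic : IntegrableOn (fun x => (x - μ) ^ k * deriv f x) (Iic a) := by
      apply integrableOn_Iic_of_intervalIntegral_norm_bounded
        ((μ - a) ^ k * f a + (k : ℝ) * C) a
        (fun m : ℝ => ((hlocP (fun x => (x - μ) ^ k)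
          (by exact (continuous_id.sub continuous_const).pow k) m a).1)) tendsto_id
      filter_upwards [eventually_le_atBot a] with m hm
      have e1 : ∫ x in m..a, ‖(x - μ) ^ k * deriv f x‖
          = ∫ x in m..a, (μ - x) ^ k * deriv f x := by
        apply intervalIntegral.integral_congr
        intro x hx
        rw [uIcc_of_le hm] at hx
        have h1 : 0 ≤ deriv f x := hasign x hx.2
        show ‖(x - μ) ^ k * deriv f x‖ = (μ - x) ^ k * deriv f x
        rw [Real.norm_eq_abs, abs_mul, abs_of_nonneg h1, abs_pow,
          abs_of_nonpos (by linarith [hx.2] : x - μ ≤ 0)]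
        rw [neg_sub]
      rw [e1]
      have parts := intervalIntegral.integral_mul_deriv_eq_deriv_mul
        (u := fun y => (μ - y) ^ k) (u' := fun y => -((k : ℝ) * (μ - y) ^ (k - 1)))
        (v := f) (v' := deriv f)
        (fun x _ => hderL x) (fun x _ => (hf x).hasDerivAt)
        (Continuous.intervalIntegrable
          (by exact (continuous_const.mul ((continuous_const.sub continuous_id).pow (k - 1))).neg)
          _ _)
        (hloc m a)
      rw [parts]
      have hfm : 0 ≤ (μ - m) ^ k * f m :=
        mul_nonneg (pow_nonneg (by linarith) k) (hfpos m).le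
      have hbnd : ∫ x in m..a, -((k : ℝ) * (μ - x) ^ (k - 1)) * f x ≥ -((k : ℝ) * C) := by
        have e2 : ∫ x in m..a, -((k : ℝ) * (μ - x) ^ (k - 1)) * f x
            = -((k : ℝ) * ∫ x in m..a, (μ - x) ^ (k - 1) * f x) := by
          simp only [neg_mul, mul_assoc]
          rw [intervalIntegral.integral_neg, intervalIntegral.integral_const_mul]
        rw [e2, intervalIntegral.integral_of_le hm]
        have := mul_le_mul_of_nonneg_left (hsub' m a hm) (Nat.cast_nonneg k)
        linarith
      linarith
    have hmid : IntegrableOn (fun x => (x - μ) ^ k * deriv f x) (Ioc a b) :=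
      (hlocP (fun x => (x - μ) ^ k)
        (by exact (continuous_id.sub continuous_const).pow k) a b).1
    have huniv : Iic a ∪ (Ioc a b ∪ Ioi b) = (univ : Set ℝ) := by
      ext x
      simp only [mem_union, mem_Iic, mem_Ioc, mem_Ioi, mem_univ, iff_true]
      rcases le_or_gt x a with h | h
      · exact Or.inl h
      · rcases le_or_gt x b with h2 | h2
        · exact Or.inr (Or.inl ⟨h, h2⟩)
        · exact Or.inr (Or.inr h2)
    have := (hIic.union (hmid.union hIoi))
    rw [huniv] at this
    exact integrableOn_univ.mp this
  -- global consequences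
  have hderint : Integrable (deriv f) := by simpa using hkey 0
  have hufint : ∀ j : ℕ, Integrable (fun x => (x - μ) ^ j * (u x * f x)) := by
    intro j
    have e : (fun x => (x - μ) ^ j * (u x * f x))
        = fun x => (x - μ) ^ j * deriv f x + (1 / α) * ((x - μ) ^ (j + 1) * f x) := by
      funext x
      rw [huf_eq x]
      field_simp
      ring
    rw [e]
    exact (hkey j).add ((hmom (j + 1)).const_mul _)
  have hderiv_zero : ∫ x, deriv f x = 0 := by
    have h1' : Integrable ((fun _ : ℝ => (1 : ℝ)) * deriv f) := by
      simpa [Pi.mul_def] using hderint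
    have h2' : Integrable ((fun _ : ℝ => (0 : ℝ)) * f) := by
      simpa [Pi.mul_def] using (integrable_zero ℝ ℝ (volume : Measure ℝ))
    have h3' : Integrable ((fun _ : ℝ => (1 : ℝ)) * f) := by
      simpa [Pi.mul_def] using hfint
    have := integral_mul_deriv_eq_deriv_mul_of_integrable
      (u := fun _ : ℝ => (1 : ℝ)) (u' := fun _ : ℝ => (0 : ℝ)) (v := f) (v' := deriv f)
      (fun x _ => hasDerivAt_const x (1 : ℝ)) (fun x _ => (hf x).hasDerivAt) h1' h2' h3'
    simpa using this
  have hufzero : ∫ x, u x * f x = 0 := by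
    have e : (fun x => u x * f x) = fun x => deriv f x + (1 / α) * ((x - μ) * f x) := by
      funext x
      rw [huf_eq x]
      field_simp
    rw [e, integral_add hderint (h1int.const_mul _), hderiv_zero, integral_const_mul]
    have e2 : (fun x => (x - μ) * f x) = fun x => x * f x - μ * f x := by
      funext x; ring
    have : ∫ x, (x - μ) * f x = 0 := by
      rw [e2, integral_sub hmeanInt (hfint.const_mul μ), hmean, integral_const_mul, hprob]
      ring
    rw [this]
    ring
  -- the recursion
  have hrec : ∀ s : ℕ, ∫ x, (x - μ) ^ (2 * s + 2) * f x
      ≤ α * (2 * s + 1) * ∫ x, (x - μ) ^ (2 * s) * f x := by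
    intro s
    have hgmono : Monotone (fun x : ℝ => (x - μ) ^ (2 * s + 1)) := by
      intro x y h
      exact (Odd.strictMono_pow (by exact ⟨s, by ring⟩)).monotone (by linarith : x - μ ≤ y - μ)
    -- integration by parts
    have hgder : ∀ x : ℝ, HasDerivAt (fun y => (y - μ) ^ (2 * s + 1))
        (((2 * s + 1 : ℕ) : ℝ) * (x - μ) ^ (2 * s)) x := by
      intro x
      have := ((hasDerivAt_id x).sub_const μ).pow (2 * s + 1)
      simpa [Pi.pow_def] using this
    have hint1 : Integrable ((fun x => (x - μ) ^ (2 * s + 1)) * deriv f) := by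
      simpa [Pi.mul_def] using hkey (2 * s + 1)
    have hint2 : Integrable ((fun x => ((2 * s + 1 : ℕ) : ℝ) * (x - μ) ^ (2 * s)) * f) := by
      have := (hmom (2 * s)).const_mul ((2 * s + 1 : ℕ) : ℝ)
      simpa [Pi.mul_def, mul_assoc] using this
    have hint3 : Integrable ((fun x => (x - μ) ^ (2 * s + 1)) * f) := by
      simpa [Pi.mul_def] using hmom (2 * s + 1)
    have hparts := integral_mul_deriv_eq_deriv_mul_of_integrable
      (u := fun x => (x - μ) ^ (2 * s + 1))
      (u' := fun x => ((2 * s + 1 : ℕ) : ℝ) * (x - μ) ^ (2 * s)) (v := f) (v' := deriv f)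
      (fun x _ => hgder x) (fun x _ => (hf x).hasDerivAt) hint1 hint2 hint3
    -- Chebyshev step
    have hcheb : ∫ x, (x - μ) ^ (2 * s + 1) * (u x * f x) ≤ 0 := by
      have huf1 : Integrable (fun x => u x * f x) := by simpa using hufint 0
      have h := slc_cheb_corr hgmono hua (fun x => (hfpos x).le) hfint
        (hmom (2 * s + 1)) huf1 (hufint (2 * s + 1))
      rw [hprob, hufzero, mul_one, mul_zero] at h
      exact h
    -- pointwise identity
    have hid : ∀ x, (x - μ) ^ (2 * s + 2) * f x
        = α * ((x - μ) ^ (2 * s + 1) * (u x * f x))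
          - α * ((x - μ) ^ (2 * s + 1) * deriv f x) := by
      intro x
      rw [huf_eq x]
      field_simp
      ring
    have e3 : ∫ x, (x - μ) ^ (2 * s + 2) * f x
        = α * (∫ x, (x - μ) ^ (2 * s + 1) * (u x * f x))
          - α * ∫ x, (x - μ) ^ (2 * s + 1) * deriv f x := by
      rw [← integral_const_mul, ← integral_const_mul,
        ← integral_sub ((hufint (2 * s + 1)).const_mul α) ((hkey (2 * s + 1)).const_mul α)]
      congr 1
      funext x
      exact hid x
    have e4 : ∫ x, (x - μ) ^ (2 * s + 1) * deriv f x
        = -(((2 * s + 1 : ℕ) : ℝ) * ∫ x, (x - μ) ^ (2 * s) * f x) := by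
      rw [hparts]
      simp only [mul_assoc]
      rw [integral_const_mul]
    have hM0 : 0 ≤ ∫ x, (x - μ) ^ (2 * s) * f x := by
      apply integral_nonneg
      intro x
      have : (0 : ℝ) ≤ (x - μ) ^ (2 * s) := by
        rw [pow_mul]
        positivity
      exact mul_nonneg this (hfpos x).le
    rw [e3, e4]
    push_cast
    nlinarith [hcheb, hα.le, hM0]
  -- induction
  have hind : ∀ s : ℕ, ∫ x, (x - μ) ^ (2 * s) * f x
      ≤ (((2 * s).factorial : ℝ) / (s.factorial : ℝ)) * (α / 2) ^ s := by
    intro s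
    induction s with
    | zero => simp [hprob]
    | succ n ih =>
      have h2 := hrec n
      have e : 2 * (n + 1) = 2 * n + 2 := by ring
      rw [e]
      have hfac : ((2 * n + 2).factorial : ℝ)
          = (2 * n + 2) * ((2 * n + 1) * ((2 * n).factorial : ℝ)) := by
        rw [show 2 * n + 2 = (2 * n + 1) + 1 by ring, Nat.factorial_succ, Nat.factorial_succ]
        push_cast
        ring
      calc ∫ x, (x - μ) ^ (2 * n + 2) * f x
          ≤ α * (2 * n + 1) * ∫ x, (x - μ) ^ (2 * n) * f x := h2
        _ ≤ α * (2 * n + 1) * ((((2 * n).factorial : ℝ) / (n.factorial : ℝ)) * (α / 2) ^ n) := by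
            apply mul_le_mul_of_nonneg_left ih (mul_nonneg hα.le (by positivity))
        _ = (((2 * n + 2).factorial : ℝ) / ((n + 1).factorial : ℝ)) * (α / 2) ^ (n + 1) := by
            rw [hfac, Nat.factorial_succ]
            have hn : ((n.factorial : ℝ)) ≠ 0 := Nat.cast_ne_zero.mpr n.factorial_ne_zero
            field_simp
            push_cast
            ring
  intro r _
  exact hind r
end

section
/- Let X be an ℕ-valued random variable with mean μ and pmf f ∈ discrete SLC(α). If for some strictly increasing v: ℕ → ℝ equality α·E[v(X+1)−v(X)] = E[(X−μ)v(X)] holds, then X is Poisson with mean α. -/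
set_option maxHeartbeats 2000000 in
/-- Equality case of the discrete one-sided Stein inequality: if `f ∈ discrete SLC(α)`
with mean `μ` and equality `α·E[v(X+1)-v(X)] = E[(X-μ)v(X)]` holds for some strictly
increasing `v`, then `X` is Poisson with mean `α`. -/
theorem discrete_slc_stein_equality_poisson
    (f : ℕ → ℝ) (hpos : ∀ n, 0 < f n) (hsum : ∑' n : ℕ, f n = 1)
    (α : ℝ) (hα : 0 < α)
    (hslc : Antitone fun k : ℕ =>
      (if k = 0 then f 0 else f k - f (k - 1)) / f k + (k : ℝ) / α)
    (μ : ℝ) (hmeanS : Summable fun n : ℕ => (n : ℝ) * f n) (hmean : ∑' n : ℕ, (n : ℝ) * f n = μ)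
    (v : ℕ → ℝ) (hv : StrictMono v)
    (hint : Summable fun k : ℕ => |v k| * f k * (1 + (k : ℝ)))
    (heq : α * ∑' k : ℕ, (v (k + 1) - v k) * f k = ∑' k : ℕ, ((k : ℝ) - μ) * v k * f k) :
    ∀ n : ℕ, f n = Real.exp (-α) * α ^ n / n.factorial := by
  have hf : Summable f := by
    by_contra h
    rw [tsum_eq_zero_of_not_summable h] at hsum
    norm_num at hsum
  have hfnn : ∀ n, 0 ≤ f n := fun n => (hpos n).le
  have hμ0 : 0 < μ := by
    have h1 : ((1:ℕ):ℝ) * f 1 ≤ μ := by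
      rw [← hmean]
      exact Summable.le_tsum hmeanS 1 (fun j _ => mul_nonneg (Nat.cast_nonneg j) (hfnn j))
    push_cast at h1
    nlinarith [hpos 1]
  -- the centered series g with sum 0
  set g : ℕ → ℝ := fun k => ((k:ℝ) - μ) * f k with hgdef
  have hgsum : Summable g := by
    have he : g = fun k : ℕ => (k:ℝ) * f k - μ * f k := by funext k; simp only [hgdef]; ring
    rw [he]; exact hmeanS.sub (hf.mul_left μ)
  have hghas : HasSum g 0 := by
    have h1 : HasSum (fun k : ℕ => (k:ℝ) * f k) μ := hmean ▸ hmeanS.hasSum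
    have h2 : HasSum (fun k => μ * f k) μ := by
      have := hf.hasSum.mul_left μ
      rwa [hsum, mul_one] at this
    have h3 := h1.sub h2
    have he : g = fun k : ℕ => (k:ℝ) * f k - μ * f k := by funext k; simp only [hgdef]; ring
    rw [he]
    simpa using h3
  set S : ℕ → ℝ := fun N => ∑ k ∈ Finset.range N, g k with hSdef
  have hS0 : Filter.Tendsto S Filter.atTop (nhds 0) := hghas.tendsto_sum_nat
  set T : ℕ → ℝ := fun k => -S (k+1) with hTdef
  have hT_succ : ∀ k, T k - T (k+1) = g (k+1) := by
    intro k
    simp only [hTdef, hSdef, Finset.sum_range_succ]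
    ring
  have hT0 : T 0 = μ * f 0 := by
    simp only [hTdef, hSdef, Finset.sum_range_one, hgdef]
    norm_num
  have htail : ∀ N, S N + ∑' j, g (j + N) = 0 := by
    intro N
    rw [hSdef]
    simp only []
    rw [Summable.sum_add_tsum_nat_add N hgsum]
    exact hghas.tsum_eq
  have hgshift : ∀ N, Summable (fun j => g (j + N)) := fun N => (summable_nat_add_iff N).2 hgsum
  have hT_nonneg : ∀ k, 0 ≤ T k := by
    intro k
    rcases lt_or_ge (k:ℝ) μ with hk | hk
    · have hs : S (k+1) ≤ 0 := by
        apply Finset.sum_nonpos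
        intro j hj
        have hj' : (j:ℝ) ≤ (k:ℝ) := by
          have := Finset.mem_range.mp hj
          exact_mod_cast Nat.lt_succ_iff.mp this
        have : (j:ℝ) - μ ≤ 0 := by linarith
        exact mul_nonpos_of_nonpos_of_nonneg this (hfnn j)
      simp only [hTdef]
      linarith
    · have h1 : S (k+1) = -∑' j, g (j + (k+1)) := by
        have := htail (k+1); linarith
      have h2 : 0 ≤ ∑' j, g (j + (k+1)) := by
        apply tsum_nonneg
        intro j
        have : μ ≤ ((j + (k+1) : ℕ) : ℝ) := by
          push_cast
          have : (0:ℝ) ≤ (j:ℝ) := by positivity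
          linarith
        exact mul_nonneg (by linarith) (hfnn _)
      simp only [hTdef]
      linarith
  -- SLC consequences
  set d : ℕ → ℝ := fun k => α * (f k / f (k+1)) with hddef
  have hd_base : 1 ≤ d 0 := by
    have H := hslc (show (0:ℕ) ≤ 1 by norm_num)
    norm_num at H
    rw [div_self (hpos 0).ne', sub_div, div_self (hpos 1).ne'] at H
    have h2 : α⁻¹ ≤ f 0 / f 1 := by linarith
    have h3 := mul_le_mul_of_nonneg_left h2 hα.le
    rw [mul_inv_cancel₀ hα.ne'] at h3
    simpa [hddef] using h3
  have hd_step : ∀ k, d k + 1 ≤ d (k+1) := by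
    intro k
    have H := hslc (show k+1 ≤ k+2 by omega)
    simp only [Nat.succ_ne_zero, if_false, Nat.add_sub_cancel] at H
    push_cast at H
    rw [sub_div, div_self (hpos (k+2)).ne', sub_div, div_self (hpos (k+1)).ne'] at H
    have hd2 : ((k:ℝ)+2)/α = ((k:ℝ)+1)/α + 1/α := by ring
    rw [hd2] at H
    have h2 : f k / f (k+1) + 1/α ≤ f (k+1) / f (k+2) := by linarith
    have h3 := mul_le_mul_of_nonneg_left h2 hα.le
    rw [mul_add, mul_one_div, div_self hα.ne'] at h3
    simpa [hddef] using h3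
  have hd_mono : Monotone d := monotone_nat_of_le_succ (fun k => by linarith [hd_step k])
  have hd_lb : ∀ k : ℕ, (k:ℝ) + 1 ≤ d k := by
    intro k
    induction k with
    | zero => simpa using hd_base
    | succ n ih =>
      have := hd_step n
      push_cast
      linarith
  have hdf : ∀ k, d k * f (k+1) = α * f k := by
    intro k
    simp only [hddef]
    rw [mul_assoc, div_mul_cancel₀ _ (hpos (k+1)).ne']
  -- μ ≤ α
  have hshift_sum : Summable (fun k : ℕ => ((k:ℝ)+1) * f (k+1)) := by
    have := (summable_nat_add_iff (f := fun n : ℕ => (n:ℝ) * f n) 1).2 hmeanS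
    refine this.congr fun k => by push_cast; ring
  have hμα : μ ≤ α := by
    have hkey : ∀ k : ℕ, ((k:ℝ)+1) * f (k+1) ≤ α * f k := by
      intro k
      have h1 : ((k:ℝ)+1) * f (k+1) ≤ d k * f (k+1) :=
        mul_le_mul_of_nonneg_right (hd_lb k) (hfnn (k+1))
      rw [hdf k] at h1; exact h1
    have h2 : μ = ∑' k : ℕ, ((k:ℝ)+1) * f (k+1) := by
      rw [← hmean, Summable.tsum_eq_zero_add hmeanS]
      push_cast
      simp
    have h3 : ∑' k : ℕ, ((k:ℝ)+1) * f (k+1) ≤ ∑' k : ℕ, α * f k :=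
      Summable.tsum_le_tsum hkey hshift_sum (hf.mul_left α)
    rw [tsum_mul_left, hsum, mul_one] at h3
    linarith [h2 ▸ h3]
  -- the deficit function U
  set b : ℕ → ℝ := fun k => d k - ((k:ℝ)+1) + μ - α with hbdef
  have hb_mono : Monotone b := by
    apply monotone_nat_of_le_succ
    intro k
    have := hd_step k
    simp only [hbdef]
    push_cast
    linarith
  set U : ℕ → ℝ := fun k => α * f k - T k with hUdef
  have hU_succ : ∀ k, U k - U (k+1) = f (k+1) * b k := by
    intro k
    have h1 := hT_succ k
    have h2 := hdf k
    simp only [hUdef, hbdef, hgdef] at *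
    push_cast at h1 ⊢
    nlinarith [h1, h2]
  have hU0 : U 0 = (α - μ) * f 0 := by
    simp only [hUdef, hT0]; ring
  have hU0_nonneg : 0 ≤ U 0 := by
    rw [hU0]; exact mul_nonneg (by linarith) (hfnn 0)
  have hU_tendsto : Filter.Tendsto U Filter.atTop (nhds 0) := by
    have h1 : Filter.Tendsto (fun k => α * f k) Filter.atTop (nhds 0) := by
      simpa using (hf.tendsto_atTop_zero.const_mul α)
    have h2 : Filter.Tendsto T Filter.atTop (nhds 0) := by
      have := hS0.comp (Filter.tendsto_add_atTop_nat 1)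
      simpa [hTdef, Function.comp] using this.neg
    simpa using h1.sub h2
  have hU_nonneg : ∀ k, 0 ≤ U k := by
    have hup : ∀ k, 0 < b k → ∀ m, k ≤ m → U m ≤ U k := by
      intro k hbk m
      induction m with
      | zero =>
        intro hkm
        have hk0 : k = 0 := Nat.le_zero.mp hkm
        exact le_of_eq (by rw [hk0])
      | succ n ih =>
        intro hkm
        rcases Nat.lt_or_ge k (n+1) with h | h
        · have hkn : k ≤ n := by omega
          have h1 : U n ≤ U k := ih hkn
          have h2 : 0 < b n := lt_of_lt_of_le hbk (hb_mono hkn)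
          have h3 := hU_succ n
          nlinarith [hpos (n+1)]
        · have hk : k = n+1 := by omega
          exact le_of_eq (by rw [hk])
    have hlow : ∀ k, b k ≤ 0 → U 0 ≤ U (k+1) := by
      intro k
      induction k with
      | zero =>
        intro hb0
        have h3 := hU_succ 0
        nlinarith [hpos 1]
      | succ n ih =>
        intro hbn1
        have hbn : b n ≤ 0 := le_trans (hb_mono (Nat.le_succ n)) hbn1
        have h1 := ih hbn
        have h3 := hU_succ (n+1)
        nlinarith [hpos (n+2)]
    intro k
    rcases le_or_gt (b k) 0 with hbk | hbk
    · match k with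
      | 0 => exact hU0_nonneg
      | (j+1) =>
        have hbj : b j ≤ 0 := le_trans (hb_mono (Nat.le_succ j)) hbk
        exact le_trans hU0_nonneg (hlow j hbj)
    · exact le_of_tendsto hU_tendsto (Filter.eventually_atTop.2 ⟨k, hup k hbk⟩)
    -- summability package for the comparison series C
  have hvf : Summable (fun k : ℕ => |v k| * f k) := by
    refine Summable.of_nonneg_of_le (fun k => mul_nonneg (abs_nonneg _) (hfnn k)) (fun k => ?_) hint
    nlinarith [mul_nonneg (mul_nonneg (abs_nonneg (v k)) (hfnn k)) (by positivity : (0:ℝ) ≤ (k:ℝ)), mul_nonneg (abs_nonneg (v k)) (hfnn k)]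
  have hkvf : Summable (fun k : ℕ => |v k| * f k * (k:ℝ)) := by
    refine Summable.of_nonneg_of_le
      (fun k => mul_nonneg (mul_nonneg (abs_nonneg _) (hfnn k)) (Nat.cast_nonneg k)) (fun k => ?_) hint
    nlinarith [mul_nonneg (mul_nonneg (abs_nonneg (v k)) (hfnn k)) (by positivity : (0:ℝ) ≤ (k:ℝ)), mul_nonneg (abs_nonneg (v k)) (hfnn k)]
  set C : ℕ → ℝ := fun k => ((k:ℝ) + |μ|) * ((|v k| + |v 0|) * f k) with hCdef
  have hCsum : Summable C := by
    have he : C = fun k : ℕ => (|v k| * f k * (k:ℝ) + |μ| * (|v k| * f k))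
        + (|v 0| * ((k:ℝ) * f k) + (|v 0| * |μ|) * f k) := by
      funext k; simp only [hCdef]; ring
    rw [he]
    exact (hkvf.add (hvf.mul_left _)).add ((hmeanS.mul_left _).add (hf.mul_left _))
  have hbound : ∀ N k : ℕ, N ≤ k → |v N| * |g k| ≤ C k := by
    intro N k hNk
    have h1 : |v N| ≤ |v k| + |v 0| := by
      rcases le_or_gt 0 (v N) with h | h
      · calc |v N| = v N := abs_of_nonneg h
          _ ≤ v k := hv.monotone hNk
          _ ≤ |v k| := le_abs_self _
          _ ≤ _ := by linarith [abs_nonneg (v 0)]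
      · have h0N : v 0 ≤ v N := hv.monotone (Nat.zero_le N)
        calc |v N| = -(v N) := abs_of_neg h
          _ ≤ -(v 0) := by linarith
          _ ≤ |v 0| := neg_le_abs _
          _ ≤ _ := by linarith [abs_nonneg (v k)]
    have h2 : |g k| ≤ ((k:ℝ) + |μ|) * f k := by
      simp only [hgdef]
      rw [abs_mul, abs_of_nonneg (hfnn k)]
      refine mul_le_mul_of_nonneg_right ?_ (hfnn k)
      calc |(k:ℝ) - μ| ≤ |(k:ℝ)| + |μ| := abs_sub _ _
        _ = (k:ℝ) + |μ| := by rw [abs_of_nonneg (Nat.cast_nonneg k)]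
    calc |v N| * |g k| ≤ (|v k| + |v 0|) * (((k:ℝ) + |μ|) * f k) :=
          mul_le_mul h1 h2 (abs_nonneg _) (by positivity)
      _ = C k := by simp only [hCdef]; ring
  set R : ℝ := ∑' k : ℕ, ((k:ℝ) - μ) * v k * f k with hRdef
  have hvg : ∀ k : ℕ, ((k:ℝ) - μ) * v k * f k = v k * g k := by
    intro k; simp only [hgdef]; ring
  have hRsum : Summable (fun k : ℕ => ((k:ℝ) - μ) * v k * f k) := by
    refine Summable.of_norm_bounded hCsum (fun k => ?_)
    rw [Real.norm_eq_abs, hvg k, abs_mul]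
    exact hbound k k le_rfl
  have hAbel : ∀ N : ℕ, (∑ k ∈ Finset.range N, ((k:ℝ) - μ) * v k * f k)
      = (∑ k ∈ Finset.range N, (v (k+1) - v k) * T k) + v N * S N := by
    intro N
    induction N with
    | zero => simp [hSdef]
    | succ n ih =>
      rw [Finset.sum_range_succ, Finset.sum_range_succ, ih]
      have hSn : S (n+1) = S n + g n := by simp only [hSdef, Finset.sum_range_succ]
      have hTn : T n = -(S n + g n) := by simp only [hTdef]; rw [hSn]
      rw [hvg n, hTn, hSn]
      ring
  have hA_tendsto : Filter.Tendsto (fun N => ∑ k ∈ Finset.range N, ((k:ℝ) - μ) * v k * f k)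
      Filter.atTop (nhds R) := by
    rw [hRdef]; exact hRsum.hasSum.tendsto_sum_nat
  have habsg : Summable (fun k => |g k|) := hgsum.abs
  have hvS_bound : ∀ N : ℕ, |v N * S N| ≤ ∑' j, C (j + N) := by
    intro N
    have h1 : S N = -∑' j, g (j + N) := by linarith [htail N]
    have habsgN : Summable (fun j => |g (j + N)|) :=
      (summable_nat_add_iff (f := fun k => |g k|) N).2 habsg
    have hCsN : Summable (fun j => C (j + N)) := (summable_nat_add_iff (f := C) N).2 hCsum
    rw [h1, abs_mul, abs_neg]
    have h2 : |∑' j, g (j + N)| ≤ ∑' j, |g (j + N)| := by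
      simpa [Real.norm_eq_abs] using
        norm_tsum_le_tsum_norm (f := fun j => g (j + N)) (by simpa [Real.norm_eq_abs] using habsgN)
    have h3 : |v N| * |∑' j, g (j + N)| ≤ |v N| * ∑' j, |g (j + N)| :=
      mul_le_mul_of_nonneg_left h2 (abs_nonneg _)
    rw [← tsum_mul_left] at h3
    exact le_trans h3 (Summable.tsum_le_tsum (fun j => hbound N (j + N) (Nat.le_add_left N j))
      (habsgN.mul_left _) hCsN)
  have htailC : Filter.Tendsto (fun N => ∑' j, C (j + N)) Filter.atTop (nhds 0) :=
    tendsto_sum_nat_add C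
  have hvS : Filter.Tendsto (fun N => v N * S N) Filter.atTop (nhds 0) :=
    squeeze_zero_norm (fun N => by rw [Real.norm_eq_abs]; exact hvS_bound N) htailC
  have hB_tendsto : Filter.Tendsto (fun N => ∑ k ∈ Finset.range N, (v (k+1) - v k) * T k)
      Filter.atTop (nhds R) := by
    have he : (fun N => ∑ k ∈ Finset.range N, (v (k+1) - v k) * T k)
        = fun N => (∑ k ∈ Finset.range N, ((k:ℝ) - μ) * v k * f k) - v N * S N := by
      funext N; rw [hAbel N]; ring
    rw [he]
    simpa using hA_tendsto.sub hvS
  have hterm_nonneg : ∀ k, 0 ≤ (v (k+1) - v k) * T k :=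
    fun k => mul_nonneg (sub_nonneg.2 (hv (Nat.lt_succ_self k)).le) (hT_nonneg k)
  -- equality forces U ≡ 0
  have hUz : ∀ k, U k = 0 := by
    by_cases hDs : Summable (fun k : ℕ => (v (k + 1) - v k) * f k)
    · have hCv := hDs.hasSum.tendsto_sum_nat
      have hW_eq : ∀ N, (∑ k ∈ Finset.range N, (v (k+1) - v k) * U k)
          = α * (∑ k ∈ Finset.range N, (v (k+1) - v k) * f k)
            - (∑ k ∈ Finset.range N, (v (k+1) - v k) * T k) := by
        intro N
        rw [Finset.mul_sum, ← Finset.sum_sub_distrib]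
        refine Finset.sum_congr rfl (fun k _ => ?_)
        simp only [hUdef]; ring
      have hW_tendsto : Filter.Tendsto (fun N => ∑ k ∈ Finset.range N, (v (k+1) - v k) * U k)
          Filter.atTop (nhds 0) := by
        have h1 := (hCv.const_mul α).sub hB_tendsto
        have h0 : α * (∑' k : ℕ, (v (k + 1) - v k) * f k) - R = 0 := by rw [heq]; ring
        rw [h0] at h1
        have he : (fun N => ∑ k ∈ Finset.range N, (v (k+1) - v k) * U k)
            = fun N => α * (∑ k ∈ Finset.range N, (v (k+1) - v k) * f k)
              - (∑ k ∈ Finset.range N, (v (k+1) - v k) * T k) := funext hW_eq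
        rw [he]
        exact h1
      have hW_mono : Monotone (fun N => ∑ k ∈ Finset.range N, (v (k+1) - v k) * U k) := by
        refine monotone_nat_of_le_succ (fun n => ?_)
        rw [Finset.sum_range_succ]
        have := mul_nonneg (sub_nonneg.2 (hv (Nat.lt_succ_self n)).le) (hU_nonneg n)
        linarith
      intro k
      have h1 : (v (k+1) - v k) * U k ≤ ∑ j ∈ Finset.range (k+1), (v (j+1) - v j) * U j :=
        Finset.single_le_sum
          (fun j _ => mul_nonneg (sub_nonneg.2 (hv (Nat.lt_succ_self j)).le) (hU_nonneg j))
          (Finset.self_mem_range_succ k)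
      have h2 := hW_mono.ge_of_tendsto hW_tendsto (k+1)
      have h3 : 0 ≤ (v (k+1) - v k) * U k :=
        mul_nonneg (sub_nonneg.2 (hv (Nat.lt_succ_self k)).le) (hU_nonneg k)
      have h4 : (v (k+1) - v k) * U k = 0 := le_antisymm (by linarith) h3
      have h5 : v k < v (k+1) := hv (Nat.lt_succ_self k)
      rcases mul_eq_zero.mp h4 with h | h
      · exact absurd h (sub_ne_zero.mpr (ne_of_gt h5))
      · exact h
    · exfalso
      have hR0 : R = 0 := by
        rw [← heq, tsum_eq_zero_of_not_summable hDs, mul_zero]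
      have h1 : ∀ N, 1 ≤ N → (v (0+1) - v 0) * T 0 ≤ ∑ k ∈ Finset.range N, (v (k+1) - v k) * T k := by
        intro N hN
        exact Finset.single_le_sum (fun j _ => hterm_nonneg j) (Finset.mem_range.mpr (by omega))
      have h2 : (v (0+1) - v 0) * T 0 ≤ R :=
        ge_of_tendsto hB_tendsto (Filter.eventually_atTop.2 ⟨1, h1⟩)
      have h3 : 0 < (v (0+1) - v 0) * T 0 := by
        rw [hT0]
        exact mul_pos (sub_pos.2 (hv Nat.zero_lt_one)) (mul_pos hμ0 (hpos 0))
      rw [hR0] at h2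
      linarith
  -- conclusion: the Poisson recursion
  have hTf : ∀ k, T k = α * f k := by
    intro k; have := hUz k; simp only [hUdef] at this; linarith
  have hrec : ∀ k : ℕ, α * f k = ((k:ℝ) + 1 + α - μ) * f (k+1) := by
    intro k
    have h1 := hT_succ k
    rw [hTf k, hTf (k+1)] at h1
    simp only [hgdef] at h1
    push_cast at h1
    linear_combination h1
  have hfs1 : Summable (fun k : ℕ => f (k+1)) := (summable_nat_add_iff 1).2 hf
  have hsum2 : ∑' k : ℕ, f (k+1) = 1 - f 0 := by
    have h := Summable.tsum_eq_zero_add hf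
    rw [hsum] at h; linarith
  have hsum1 : ∑' k : ℕ, ((k:ℝ)+1) * f (k+1) = μ := by
    have h := Summable.tsum_eq_zero_add hmeanS
    rw [hmean] at h
    simp only [Nat.cast_zero, zero_mul, zero_add] at h
    rw [h]
    exact tsum_congr (fun k => by push_cast; ring)
  have hμeq : μ = α := by
    have hL : ∑' k : ℕ, α * f k = α := by rw [tsum_mul_left, hsum, mul_one]
    have hRz : ∑' k : ℕ, ((k:ℝ) + 1 + α - μ) * f (k+1) = μ + (α - μ) * (1 - f 0) := by
      have he : (fun k : ℕ => ((k:ℝ) + 1 + α - μ) * f (k+1))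
          = fun k : ℕ => ((k:ℝ)+1) * f (k+1) + (α - μ) * f (k+1) := by
        funext k; ring
      rw [he, Summable.tsum_add hshift_sum (hfs1.mul_left _), hsum1, tsum_mul_left, hsum2]
    have hLR : ∑' k : ℕ, α * f k = ∑' k : ℕ, ((k:ℝ) + 1 + α - μ) * f (k+1) :=
      tsum_congr (fun k => by rw [hrec k])
    rw [hL, hRz] at hLR
    have hz : (α - μ) * f 0 = 0 := by nlinarith [hLR]
    rcases mul_eq_zero.mp hz with h | h
    · linarith
    · exact absurd h (hpos 0).ne'
  have hrec2 : ∀ k : ℕ, α * f k = ((k:ℝ) + 1) * f (k+1) := by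
    intro k
    have h := hrec k
    rw [hμeq] at h
    linear_combination h
  have hform : ∀ n : ℕ, f n = f 0 * α ^ n / n.factorial := by
    intro n
    induction n with
    | zero => simp
    | succ n ih =>
      have h := hrec2 n
      have hne : ((n:ℝ)+1) ≠ 0 := Nat.cast_add_one_ne_zero n
      have hstep : f (n+1) = α * f n / ((n:ℝ)+1) := by
        rw [eq_div_iff hne]
        linear_combination -h
      rw [hstep, ih, pow_succ, Nat.factorial_succ]
      push_cast
      have hfac : ((n.factorial : ℝ)) ≠ 0 := by positivity
      field_simp
  have hf0 : f 0 = Real.exp (-α) := by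
    have h1 : ∑' n : ℕ, f 0 * (α ^ n / n.factorial) = f 0 * Real.exp α := by
      rw [tsum_mul_left]
      congr 1
      rw [Real.exp_eq_exp_ℝ, NormedSpace.exp_eq_tsum_div]
    have h2 : ∑' n : ℕ, f n = ∑' n : ℕ, f 0 * (α ^ n / n.factorial) :=
      tsum_congr (fun n => by rw [hform n]; ring)
    rw [hsum] at h2
    have h3 : f 0 * Real.exp α = 1 := by rw [← h1, ← h2]
    have hexp := Real.exp_ne_zero α
    rw [Real.exp_neg]
    field_simp
    linarith [h3]
  intro n
  rw [hform n, hf0]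
end

section
/- Let X be an ℕ-valued random variable with pmf f ∈ discrete SLC(α). Then Var(X) ≤ α. -/
/-- Variance bound for discrete SLC pmfs: if `X` is ℕ-valued with pmf `f ∈ discrete
SLC(α)` and finite second moment, then `Var(X) ≤ α`. -/
theorem discrete_slc_variance_le
    (f : ℕ → ℝ) (hpos : ∀ n, 0 < f n) (hsum : ∑' n : ℕ, f n = 1)
    (α : ℝ) (hα : 0 < α)
    (hslc : Antitone fun k : ℕ =>
      (if k = 0 then f 0 else f k - f (k - 1)) / f k + (k : ℝ) / α)
    (μ : ℝ) (hmeanS : Summable fun n : ℕ => (n : ℝ) * f n) (hmean : ∑' n : ℕ, (n : ℝ) * f n = μ)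
    (hsq : Summable fun n : ℕ => (n : ℝ) ^ 2 * f n) :
    ∑' n : ℕ, ((n : ℝ) - μ) ^ 2 * f n ≤ α := by
  classical
  -- f is summable
  have hf : Summable f := by
    by_contra h
    rw [tsum_eq_zero_of_not_summable h] at hsum
    norm_num at hsum
  -- shifted pmf g
  set g : ℕ → ℝ := fun k => if k = 0 then 0 else f (k - 1) with hg_def
  have hg1 : ∀ k : ℕ, g (k + 1) = f k := by intro k; simp [hg_def]
  have hgS : Summable g := by
    rw [← summable_nat_add_iff 1]
    simpa [hg1] using hf
  have hgsum : ∑' k : ℕ, g k = 1 := by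
    rw [Summable.tsum_eq_zero_add hgS]
    simp only [hg1, hg_def]
    simpa using hsum
  -- k * g k
  have hkg1 : ∀ k : ℕ, ((k + 1 : ℕ) : ℝ) * g (k + 1) = (k : ℝ) * f k + f k := by
    intro k; rw [hg1]; push_cast; ring
  have hkgS : Summable (fun k : ℕ => (k : ℝ) * g k) := by
    rw [← summable_nat_add_iff 1]
    simp only [hkg1]
    exact hmeanS.add hf
  have hkgsum : ∑' k : ℕ, (k : ℝ) * g k = μ + 1 := by
    rw [Summable.tsum_eq_zero_add hkgS]
    simp only [hkg1]
    rw [Summable.tsum_add hmeanS hf, hmean, hsum]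
    simp [hg_def]
  -- the discrete derivative D
  set D : ℕ → ℝ := fun k => if k = 0 then f 0 else f k - f (k - 1) with hD_def
  have hDg : ∀ k : ℕ, D k = f k - g k := by
    intro k
    cases k with
    | zero => simp [hD_def, hg_def]
    | succ n => simp [hD_def, hg_def]
  have hDS : Summable D := by
    have := hf.sub hgS
    simpa [← hDg] using this
  have hDsum : ∑' k : ℕ, D k = 0 := by
    have h1 : ∑' k : ℕ, D k = ∑' k : ℕ, (f k - g k) := tsum_congr fun k => hDg k
    rw [h1, Summable.tsum_sub hf hgS, hsum, hgsum, sub_self]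
  -- k * D k
  have hkDS : Summable (fun k : ℕ => (k : ℝ) * D k) := by
    have h1 : (fun k : ℕ => (k : ℝ) * D k)
        = fun k : ℕ => (k : ℝ) * f k - (k : ℝ) * g k := by
      funext k; rw [hDg]; ring
    rw [h1]
    exact hmeanS.sub hkgS
  have hkDsum : ∑' k : ℕ, (k : ℝ) * D k = -1 := by
    have h1 : ∑' k : ℕ, (k : ℝ) * D k = ∑' k : ℕ, ((k : ℝ) * f k - (k : ℝ) * g k) :=
      tsum_congr fun k => by rw [hDg]; ring
    rw [h1, Summable.tsum_sub hmeanS hkgS, hmean, hkgsum]; ring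
  -- (k - μ) * D k
  have hmDS : Summable (fun k : ℕ => ((k : ℝ) - μ) * D k) := by
    have h1 : (fun k : ℕ => ((k : ℝ) - μ) * D k)
        = fun k : ℕ => (k : ℝ) * D k - μ * D k := by funext k; ring
    rw [h1]
    exact hkDS.sub (hDS.mul_left μ)
  have hmDsum : ∑' k : ℕ, ((k : ℝ) - μ) * D k = -1 := by
    have h1 : ∑' k : ℕ, ((k : ℝ) - μ) * D k = ∑' k : ℕ, ((k : ℝ) * D k - μ * D k) :=
      tsum_congr fun k => by ring
    rw [h1, Summable.tsum_sub hkDS (hDS.mul_left μ), hkDsum, tsum_mul_left, hDsum]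
    ring
  -- (k - μ) * f k
  have hmfS : Summable (fun k : ℕ => ((k : ℝ) - μ) * f k) := by
    have h1 : (fun k : ℕ => ((k : ℝ) - μ) * f k)
        = fun k : ℕ => (k : ℝ) * f k - μ * f k := by funext k; ring
    rw [h1]
    exact hmeanS.sub (hf.mul_left μ)
  have hmfsum : ∑' k : ℕ, ((k : ℝ) - μ) * f k = 0 := by
    have h1 : ∑' k : ℕ, ((k : ℝ) - μ) * f k = ∑' k : ℕ, ((k : ℝ) * f k - μ * f k) :=
      tsum_congr fun k => by ring
    rw [h1, Summable.tsum_sub hmeanS (hf.mul_left μ), hmean, tsum_mul_left, hsum]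
    ring
  -- (k - μ) * k * f k
  have hmkfS : Summable (fun k : ℕ => ((k : ℝ) - μ) * (k : ℝ) * f k) := by
    have h1 : (fun k : ℕ => ((k : ℝ) - μ) * (k : ℝ) * f k)
        = fun k : ℕ => (k : ℝ) ^ 2 * f k - μ * ((k : ℝ) * f k) := by
      funext k; ring
    rw [h1]
    exact hsq.sub (hmeanS.mul_left μ)
  -- variance equals ∑ (k-μ) k f k
  have hVeq : ∑' k : ℕ, ((k : ℝ) - μ) ^ 2 * f k
      = ∑' k : ℕ, ((k : ℝ) - μ) * (k : ℝ) * f k := by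
    have h1 : ∑' k : ℕ, ((k : ℝ) - μ) ^ 2 * f k
        = ∑' k : ℕ, (((k : ℝ) - μ) * (k : ℝ) * f k - μ * (((k : ℝ) - μ) * f k)) :=
      tsum_congr fun k => by ring
    rw [h1, Summable.tsum_sub hmkfS (hmfS.mul_left μ), tsum_mul_left, hmfsum]
    ring
  -- the SLC function H
  set H : ℕ → ℝ := fun k : ℕ =>
    (if k = 0 then f 0 else f k - f (k - 1)) / f k + (k : ℝ) / α with hH_def
  have hHD : ∀ k : ℕ, H k = D k / f k + (k : ℝ) / α := fun k => rfl
  have hHf : ∀ k : ℕ, H k * f k = D k + (k : ℝ) * f k / α := by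
    intro k
    have hfk := (hpos k).ne'
    rw [hHD]
    field_simp
  have hLeq : ∀ k : ℕ, ((k : ℝ) - μ) * H k * f k
      = ((k : ℝ) - μ) * D k + ((k : ℝ) - μ) * (k : ℝ) * f k / α := by
    intro k
    calc ((k : ℝ) - μ) * H k * f k = ((k : ℝ) - μ) * (H k * f k) := by ring
    _ = ((k : ℝ) - μ) * (D k + (k : ℝ) * f k / α) := by rw [hHf k]
    _ = ((k : ℝ) - μ) * D k + ((k : ℝ) - μ) * (k : ℝ) * f k / α := by ring
  have hLS : Summable (fun k : ℕ => ((k : ℝ) - μ) * H k * f k) := by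
    rw [show (fun k : ℕ => ((k : ℝ) - μ) * H k * f k)
        = fun k : ℕ => ((k : ℝ) - μ) * D k + ((k : ℝ) - μ) * (k : ℝ) * f k / α
        from funext hLeq]
    exact hmDS.add (hmkfS.div_const α)
  have hLsum : ∑' k : ℕ, ((k : ℝ) - μ) * H k * f k
      = -1 + (∑' k : ℕ, ((k : ℝ) - μ) ^ 2 * f k) / α := by
    rw [tsum_congr hLeq, Summable.tsum_add hmDS (hmkfS.div_const α), hmDsum, tsum_div_const, ← hVeq]
  -- μ ≥ 0
  have hμ0 : 0 ≤ μ := by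
    rw [← hmean]
    exact tsum_nonneg fun k => mul_nonneg (Nat.cast_nonneg k) (hpos k).le
  -- pointwise Chebyshev bound with threshold c = H ⌈μ⌉₊
  set n₀ : ℕ := ⌈μ⌉₊ with hn0
  set c : ℝ := H n₀ with hc
  have key : ∀ k : ℕ, ((k : ℝ) - μ) * (H k - c) ≤ 0 := by
    intro k
    rcases le_or_gt μ (k : ℝ) with hk | hk
    · have hkn : n₀ ≤ k := Nat.ceil_le.mpr hk
      have h2 : H k ≤ c := hslc hkn
      exact mul_nonpos_of_nonneg_of_nonpos (by linarith) (by linarith)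
    · have hkn : k ≤ n₀ := by
        have h3 : (k : ℝ) < (n₀ : ℝ) := lt_of_lt_of_le hk (Nat.le_ceil μ)
        exact_mod_cast h3.le
      have h2 : c ≤ H k := hslc hkn
      exact mul_nonpos_of_nonpos_of_nonneg (by linarith) (by linarith)
  have hpt : ∀ k : ℕ, ((k : ℝ) - μ) * H k * f k ≤ c * (((k : ℝ) - μ) * f k) := by
    intro k
    have h1 : ((k : ℝ) - μ) * (H k - c) * f k ≤ 0 :=
      mul_nonpos_of_nonpos_of_nonneg (key k) (hpos k).le
    nlinarith [h1]
  have hineq : ∑' k : ℕ, ((k : ℝ) - μ) * H k * f k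
      ≤ ∑' k : ℕ, c * (((k : ℝ) - μ) * f k) :=
    Summable.tsum_le_tsum hpt hLS (hmfS.mul_left c)
  rw [hLsum, tsum_mul_left, hmfsum, mul_zero] at hineq
  have hVα : (∑' k : ℕ, ((k : ℝ) - μ) ^ 2 * f k) / α ≤ 1 := by linarith
  rw [div_le_one hα] at hVα
  exact hVα
end

section
/- If f: ℕ → (0,∞) is a pmf satisfying ∇f(n)/f(n) + n/α = c for all n ≥ 0 for some constant c (where ∇f(0) = f(0), ∇f(n) = f(n) − f(n−1)), then c = 1 and f is the Poisson(α) pmf: f(n) = e^{-α}αⁿ/n!. -/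
/-- If a positive pmf `f : ℕ → ℝ` satisfies `∇f(n)/f(n) + n/α = c` for all `n` (where
`∇f(0) = f(0)` and `∇f(n) = f(n) - f(n-1)`), then `c = 1` and `f` is the Poisson(α) pmf. -/
theorem discrete_slc_constant_is_poisson
    (f : ℕ → ℝ) (hpos : ∀ n, 0 < f n) (hsum : ∑' n, f n = 1)
    (α : ℝ) (hα : 0 < α) (c : ℝ)
    (hconst : ∀ n : ℕ,
      (if n = 0 then f 0 else f n - f (n - 1)) / f n + (n : ℝ) / α = c) :
    c = 1 ∧ ∀ n : ℕ, f n = Real.exp (-α) * α ^ n / n.factorial := by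
  have hc : c = 1 := by
    have h0 := hconst 0
    simp [div_self (hpos 0).ne'] at h0
    linarith
  subst hc
  -- recurrence: f n = f 0 * α^n / n!
  have hrec : ∀ n : ℕ, f (n + 1) = α * f n / (n + 1) := by
    intro n
    have h := hconst (n + 1)
    simp only [Nat.succ_ne_zero, if_false, Nat.add_sub_cancel] at h
    have hfn1 := (hpos (n + 1)).ne'
    have hn1 : ((n : ℝ) + 1) ≠ 0 := by positivity
    field_simp at h ⊢
    push_cast at h
    nlinarith [hpos (n+1), hpos n]
  have hform : ∀ n : ℕ, f n = f 0 * α ^ n / n.factorial := by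
    intro n
    induction n with
    | zero => simp
    | succ k ih =>
      rw [hrec k, ih, Nat.factorial_succ]
      have hk : (k.factorial : ℝ) ≠ 0 := by positivity
      push_cast
      field_simp
      ring
  -- sum gives f 0 = exp (-α)
  have hsum2 : ∑' n : ℕ, f 0 * α ^ n / n.factorial = f 0 * Real.exp α := by
    rw [Real.exp_eq_exp_ℝ, NormedSpace.exp_eq_tsum_div]
    rw [← tsum_mul_left]
    congr 1; ext n; ring
  have h1 : f 0 * Real.exp α = 1 := by
    rw [← hsum2, ← hsum]; congr 1; ext n; exact (hform n).symm
  have hf0 : f 0 = Real.exp (-α) := by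
    rw [Real.exp_neg]
    field_simp at h1 ⊢
    linarith
  exact ⟨rfl, fun n => by rw [hform n, hf0]⟩
end

section
/- If f: ℝ → (0,∞) is a differentiable probability density with mean μ satisfying f'(x)/f(x) + (x − μ)/α = A for all x in its (interval) support, for constants A ∈ ℝ and α > 0, then A = 0 and f is the Gaussian density N(μ, α): f(x) = (2πα)^{-1/2} exp(−(x−μ)²/(2α)). -/
open MeasureTheory

lemma odd_integral_zero {g : ℝ → ℝ} (hg : Integrable g) (hodd : ∀ x, g (-x) = -g x) :
    ∫ x, g x = 0 := by
  have h1 : ∫ x in Set.Iic (0:ℝ), g x = - ∫ x in Set.Ioi (0:ℝ), g x := by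
    have := integral_comp_neg_Ioi (0:ℝ) g
    rw [neg_zero] at this
    rw [← this]
    simp_rw [hodd]
    exact integral_neg g
  have h2 : (∫ x in Set.Iic (0:ℝ), g x) + ∫ x in Set.Ioi (0:ℝ), g x = ∫ x, g x :=
    intervalIntegral.integral_Iic_add_Ioi hg.integrableOn hg.integrableOn
  linarith

/-- Differential-equation characterization of the Gaussian: if a positive differentiable
probability density `f` with mean `μ` satisfies `f'(x)/f(x) + (x-μ)/α = A` for all `x`,
then `A = 0` and `f` is the `N(μ, α)` density. -/
theorem density_ode_is_gaussian
    (f : ℝ → ℝ) (hf : Differentiable ℝ f) (hfpos : ∀ x, 0 < f x)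
    (α : ℝ) (hα : 0 < α) (A : ℝ)
    (hprob : ∫ x, f x = 1)
    (μ : ℝ) (hmeanInt : Integrable fun x => x * f x) (hmean : ∫ x, x * f x = μ)
    (hode : ∀ x, deriv f x / f x + (x - μ) / α = A) :
    A = 0 ∧
      ∀ x, f x = (Real.sqrt (2 * Real.pi * α))⁻¹ * Real.exp (-(x - μ) ^ 2 / (2 * α)) := by
  set m : ℝ := μ + A * α with hm
  set b : ℝ := (2 * α)⁻¹ with hb
  have hbpos : 0 < b := by positivity
  -- Step 1: f x = f m * exp (-b * (x - m)^2)
  obtain ⟨C, hCpos, key⟩ : ∃ C, 0 < C ∧ ∀ x, f x = C * Real.exp (-b * (x - m) ^ 2) := by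
    refine ⟨f m, hfpos m, ?_⟩
    set g : ℝ → ℝ := fun x => Real.log (f x) + b * (x - m) ^ 2 with hg
    have hgd : ∀ x, HasDerivAt g 0 x := by
      intro x
      have h1 : HasDerivAt (fun x => Real.log (f x)) (deriv f x / f x) x :=
        (hf x).hasDerivAt.log (hfpos x).ne'
      have h2 : HasDerivAt (fun x => b * (x - m) ^ 2) (b * (2 * (x - m))) x := by
        have : HasDerivAt (fun x : ℝ => (x - m) ^ 2) (2 * (x - m) ^ 1 * 1) x :=
          ((hasDerivAt_id x).sub_const m).pow 2
        simpa using this.const_mul b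
      have := h1.add h2
      suffices e : (0:ℝ) = deriv f x / f x + b * (2 * (x - m)) by rw [e]; exact this
      have h3 := hode x
      have : deriv f x / f x = A - (x - μ) / α := by linarith
      rw [this]
      rw [hb, hm]; field_simp
      ring
    have hconst : ∀ x, g x = g m := fun x =>
      is_const_of_deriv_eq_zero (fun y => (hgd y).differentiableAt)
        (fun y => (hgd y).deriv) x m
    intro x
    have hx := hconst x
    have : Real.log (f x) = Real.log (f m) - b * (x - m) ^ 2 := by
      simp only [hg] at hx; rw [sub_self] at hx; simp at hx; linarith
    have h4 := congrArg Real.exp this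
    rw [Real.exp_log (hfpos x), Real.exp_sub, Real.exp_log (hfpos m)] at h4
    rw [h4, neg_mul, Real.exp_neg, div_eq_mul_inv]
  -- Integrals of the Gaussian
  have hIg : ∫ x : ℝ, Real.exp (-b * x ^ 2) = Real.sqrt (2 * Real.pi * α) := by
    rw [integral_gaussian]
    congr 1
    field_simp [hb]
    rw [hb]; field_simp
  have hIgInt : Integrable fun x : ℝ => Real.exp (-b * x ^ 2) := integrable_exp_neg_mul_sq hbpos
  have hIxg : ∫ x : ℝ, x * Real.exp (-b * x ^ 2) = 0 := by
    apply odd_integral_zero (integrable_mul_exp_neg_mul_sq hbpos)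
    intro x; simp [neg_mul]
  have hIxgInt : Integrable fun x : ℝ => x * Real.exp (-b * x ^ 2) :=
    integrable_mul_exp_neg_mul_sq hbpos
  set S : ℝ := Real.sqrt (2 * Real.pi * α) with hS
  have hSpos : 0 < S := Real.sqrt_pos.mpr (by positivity)
  -- ∫ f = C * S
  have hshift : ∫ a : ℝ, Real.exp (-b * (a - m) ^ 2) = S := by
    rw [← integral_add_right_eq_self (fun x => Real.exp (-b * (x - m) ^ 2)) m]
    simp_rw [add_sub_cancel_right]
    exact hIg
  have hint1 : ∫ x, f x = C * S := by
    simp_rw [key]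
    rw [integral_const_mul, hshift]
  have hfm : C = S⁻¹ := by
    rw [hprob] at hint1
    field_simp at hint1 ⊢
    linarith
  -- mean computation
  have hmean2 : ∫ x, x * f x = m := by
    simp_rw [key, hfm]
    rw [← integral_add_right_eq_self (μ := volume)
      (fun x => x * (S⁻¹ * Real.exp (-b * (x - m) ^ 2))) m]
    simp_rw [add_sub_cancel_right]
    have heq : ∀ x : ℝ, (x + m) * (S⁻¹ * Real.exp (-b * x ^ 2))
        = S⁻¹ * (x * Real.exp (-b * x ^ 2)) + m * S⁻¹ * Real.exp (-b * x ^ 2) := by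
      intro x; ring
    simp_rw [heq]
    rw [integral_add ((hIxgInt.const_mul _)) ((hIgInt.const_mul _)), integral_const_mul,
      integral_const_mul, hIxg, hIg]
    rw [mul_zero, zero_add, mul_assoc, inv_mul_cancel₀ hSpos.ne', mul_one]
  have hA : A = 0 := by
    rw [hmean] at hmean2
    have : A * α = 0 := by rw [hm] at hmean2; linarith
    exact (mul_eq_zero.mp this).resolve_right hα.ne'
  refine ⟨hA, fun x => ?_⟩
  have hmμ : m = μ := by rw [hm, hA]; ring
  rw [key x, hfm, hmμ, hS]
  congr 1
  rw [neg_mul, hb]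
  field_simp
end

section
/- Let X be a random variable on {0,…,N} with mean μ and pmf f ∈ SLC_N(α), and v: {0,…,N} → ℝ strictly increasing. Then α·E[((N−X)/N)(v(X+1) − v(X))·1_{X<N}] ≥ E[(X − μ)v(X)]. In particular, taking v(x) = x − μ gives Var(X) ≤ α(1 − μ/N). -/
open Finset


lemma cheb_weighted (s : Finset ℕ) (w u v : ℕ → ℝ) (hw : ∀ i ∈ s, 0 ≤ w i)
    (h : ∀ i ∈ s, ∀ j ∈ s, (u i - u j) * (v i - v j) ≤ 0) :
    (∑ i ∈ s, w i) * ∑ i ∈ s, u i * v i * w i ≤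
      (∑ i ∈ s, u i * w i) * ∑ i ∈ s, v i * w i := by
  have key : ∑ i ∈ s, ∑ j ∈ s, w i * w j * ((u i - u j) * (v i - v j)) ≤ 0 :=
    Finset.sum_nonpos fun i hi => Finset.sum_nonpos fun j hj =>
      mul_nonpos_of_nonneg_of_nonpos (mul_nonneg (hw i hi) (hw j hj)) (h i hi j hj)
  have e1 : ∑ i ∈ s, ∑ j ∈ s, w i * w j * ((u i - u j) * (v i - v j))
      = (∑ i ∈ s, w i) * (∑ i ∈ s, u i * v i * w i)
        - (∑ i ∈ s, u i * w i) * (∑ i ∈ s, v i * w i)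
        - (∑ i ∈ s, v i * w i) * (∑ i ∈ s, u i * w i)
        + (∑ i ∈ s, u i * v i * w i) * (∑ i ∈ s, w i) := by
    simp_rw [Finset.sum_mul_sum, ← Finset.sum_sub_distrib, ← Finset.sum_add_distrib]
    exact Finset.sum_congr rfl fun i _ => Finset.sum_congr rfl fun j _ => by ring
  nlinarith [key, e1]

/-- One-sided Stein inequality for pmfs on `{0,…,N}` in `SLC_N(α)`: if `u(n) =
∇_N f(n)/f(n) + (n-μ)/α` is non-increasing on `{0,…,N}` and `v` is strictly increasing
on `{0,…,N}`, then `α·E[∇_N* v(X)] ≥ E[(X-μ)v(X)]`; in particular (taking `v(x) = x - μ`)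
`Var(X) ≤ α(1 - μ/N)`. -/
theorem slcN_one_sided_stein_and_variance
    (N : ℕ) (hN : 0 < N)
    (f : ℕ → ℝ) (hpos : ∀ n, n ≤ N → 0 < f n)
    (hsum : ∑ n ∈ range (N + 1), f n = 1)
    (α : ℝ) (hα : 0 < α)
    (μ : ℝ) (hmean : ∑ n ∈ range (N + 1), (n : ℝ) * f n = μ)
    (hslc : ∀ m n : ℕ, m ≤ n → n ≤ N →
      (if n = 0 then f 0
        else (((N : ℝ) - n) / N) * f n - (((N : ℝ) - n + 1) / N) * f (n - 1)) / f n +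
          ((n : ℝ) - μ) / α
      ≤ (if m = 0 then f 0
        else (((N : ℝ) - m) / N) * f m - (((N : ℝ) - m + 1) / N) * f (m - 1)) / f m +
          ((m : ℝ) - μ) / α)
    (v : ℕ → ℝ) (hv : ∀ m n : ℕ, m < n → n ≤ N → v m < v n) :
    α * ∑ n ∈ range N, (((N : ℝ) - n) / N) * (v (n + 1) - v n) * f n
        ≥ ∑ n ∈ range (N + 1), ((n : ℝ) - μ) * v n * f n ∧
      ∑ n ∈ range (N + 1), ((n : ℝ) - μ) ^ 2 * f n ≤ α * (1 - μ / N) := by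
  have hNpos : (0:ℝ) < N := by exact_mod_cast hN
  set g : ℕ → ℝ := fun n => (((N:ℝ) - n) / N) * f n with hg
  set D : ℕ → ℝ := fun n => if n = 0 then f 0
      else (((N : ℝ) - n) / N) * f n - (((N : ℝ) - n + 1) / N) * f (n - 1) with hD
  have hD0 : D 0 = g 0 := by
    simp [hD, hg, div_self hNpos.ne']
  have hDsucc : ∀ n : ℕ, D (n + 1) = g (n + 1) - g n := by
    intro n
    simp only [hD, hg, Nat.succ_ne_zero, if_false, Nat.add_sub_cancel]
    push_cast
    ring
  have hgN : g N = 0 := by simp [hg]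
  -- Abel summation
  have habel : ∀ w : ℕ → ℝ, ∑ n ∈ range (N + 1), D n * w n
      = -∑ n ∈ range N, g n * (w (n + 1) - w n) := by
    intro w
    rw [Finset.sum_range_succ']
    simp only [hDsucc, hD0]
    have h2 : ∑ n ∈ range N, g (n + 1) * w (n + 1)
        = ∑ n ∈ range (N + 1), g n * w n - g 0 * w 0 := by
      rw [Finset.sum_range_succ']; ring
    have h3 : ∑ n ∈ range (N + 1), g n * w n = ∑ n ∈ range N, g n * w n := by
      rw [Finset.sum_range_succ, hgN]; ring
    have hsplit : ∑ n ∈ range N, (g (n + 1) - g n) * w (n + 1)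
        = ∑ n ∈ range N, g (n + 1) * w (n + 1) - ∑ n ∈ range N, g n * w (n + 1) := by
      rw [← Finset.sum_sub_distrib]
      exact Finset.sum_congr rfl fun n _ => by ring
    have hsplit2 : ∑ n ∈ range N, g n * (w (n + 1) - w n)
        = ∑ n ∈ range N, g n * w (n + 1) - ∑ n ∈ range N, g n * w n := by
      rw [← Finset.sum_sub_distrib]
      exact Finset.sum_congr rfl fun n _ => by ring
    rw [hsplit, h2, h3, hsplit2]
    ring
  have hDzero : ∑ n ∈ range (N + 1), D n = 0 := by
    have := habel fun _ => 1
    simpa using this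
  -- the u function
  set u : ℕ → ℝ := fun n => D n / f n + ((n : ℝ) - μ) / α with hu
  -- key inequality for any strictly increasing w
  have key : ∀ w : ℕ → ℝ, (∀ m n : ℕ, m < n → n ≤ N → w m < w n) →
      ∑ n ∈ range (N + 1), ((n : ℝ) - μ) * w n * f n
        ≤ α * ∑ n ∈ range N, (((N : ℝ) - n) / N) * (w (n + 1) - w n) * f n := by
    intro w hw
    have hmono : ∀ i ∈ range (N + 1), ∀ j ∈ range (N + 1),
        (u i - u j) * (w i - w j) ≤ 0 := by
      intro i hi j hj
      rw [Finset.mem_range] at hi hj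
      rcases lt_trichotomy i j with hij | hij | hij
      · have h1 : u j ≤ u i := hslc i j hij.le (by omega)
        have h2 : w i < w j := hw i j hij (by omega)
        nlinarith
      · simp [hij]
      · have h1 : u i ≤ u j := hslc j i hij.le (by omega)
        have h2 : w j < w i := hw j i hij (by omega)
        nlinarith
    have hcheb := cheb_weighted (range (N + 1)) f u w
      (fun i hi => (hpos i (by simpa using Nat.lt_succ_iff.mp (Finset.mem_range.mp hi))).le)
      hmono
    rw [hsum, one_mul] at hcheb
    have huf : ∀ n ∈ range (N + 1), ∀ q : ℝ, u n * q * f n = D n * q + ((n : ℝ) - μ) / α * q * f n := by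
      intro n hn q
      have hf : f n ≠ 0 := (hpos n (Nat.lt_succ_iff.mp (Finset.mem_range.mp hn))).ne'
      rw [hu]
      field_simp
    have hA : ∑ n ∈ range (N + 1), u n * f n = 0 := by
      have e : ∑ n ∈ range (N + 1), u n * f n
          = ∑ n ∈ range (N + 1), (D n + ((n : ℝ) - μ) / α * f n) := by
        refine Finset.sum_congr rfl fun n hn => ?_
        have := huf n hn 1
        simpa using this
      rw [e, Finset.sum_add_distrib, hDzero, zero_add]
      have e2 : ∑ n ∈ range (N + 1), ((n : ℝ) - μ) / α * f n
          = (∑ n ∈ range (N + 1), (n : ℝ) * f n - μ * ∑ n ∈ range (N + 1), f n) / α := by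
        rw [Finset.mul_sum, ← Finset.sum_sub_distrib, Finset.sum_div]
        refine Finset.sum_congr rfl fun n _ => ?_
        ring
      rw [e2, hmean, hsum]
      ring
    have hC : ∑ n ∈ range (N + 1), u n * w n * f n
        = -∑ n ∈ range N, g n * (w (n + 1) - w n)
          + (∑ n ∈ range (N + 1), ((n : ℝ) - μ) * w n * f n) / α := by
      have e : ∑ n ∈ range (N + 1), u n * w n * f n
          = ∑ n ∈ range (N + 1), (D n * w n + ((n : ℝ) - μ) / α * w n * f n) := by
        refine Finset.sum_congr rfl fun n hn => ?_
        exact huf n hn (w n)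
      rw [e, Finset.sum_add_distrib, habel w]
      congr 1
      rw [Finset.sum_div]
      refine Finset.sum_congr rfl fun n _ => ?_
      ring
    rw [hA, zero_mul, hC] at hcheb
    have hgsum : ∑ n ∈ range N, g n * (w (n + 1) - w n)
        = ∑ n ∈ range N, (((N : ℝ) - n) / N) * (w (n + 1) - w n) * f n := by
      refine Finset.sum_congr rfl fun n _ => ?_
      rw [hg]; ring
    rw [hgsum] at hcheb
    have h4 : (∑ n ∈ range (N + 1), ((n : ℝ) - μ) * w n * f n) / α
        ≤ ∑ n ∈ range N, (((N : ℝ) - n) / N) * (w (n + 1) - w n) * f n := by linarith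
    have h5 := (div_le_iff₀ hα).mp h4
    linarith
  constructor
  · exact key v hv
  · have hw2 : ∀ m n : ℕ, m < n → n ≤ N → ((m : ℝ) - μ) < ((n : ℝ) - μ) := by
      intro m n hmn _
      have : (m : ℝ) < n := by exact_mod_cast hmn
      linarith
    have h2 := key (fun n => (n : ℝ) - μ) hw2
    have eL : ∑ n ∈ range (N + 1), ((n : ℝ) - μ) * ((n : ℝ) - μ) * f n
        = ∑ n ∈ range (N + 1), ((n : ℝ) - μ) ^ 2 * f n := by
      refine Finset.sum_congr rfl fun n _ => by ring
    have eR : ∑ n ∈ range N, (((N : ℝ) - n) / N) * (((n : ℝ) + 1 - μ) - ((n : ℝ) - μ)) * f n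
        = 1 - μ / N := by
      have e3 : ∑ n ∈ range N, (((N : ℝ) - n) / N) * (((n : ℝ) + 1 - μ) - ((n : ℝ) - μ)) * f n
          = ∑ n ∈ range (N + 1), (f n - 1 / N * ((n : ℝ) * f n)) := by
        rw [Finset.sum_range_succ]
        have hlast : f N - 1 / (N : ℝ) * ((N : ℝ) * f N) = 0 := by
          field_simp
          ring
        rw [hlast, add_zero]
        refine Finset.sum_congr rfl fun n _ => ?_
        field_simp
        ring
      rw [e3, Finset.sum_sub_distrib, hsum, ← Finset.mul_sum, hmean]
      ring
    simp only [Nat.cast_add, Nat.cast_one] at h2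
    rw [eL] at h2
    rw [eR] at h2
    linarith [h2]
end
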